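/- arXiv:2511.03524 — 2 statements merged into one kernel-verified Lean document; each statement's English description precedes it below -/
import Mathlib

section
/- Let X be a connected graph and suppose there exists a proper incidence coloring φ : Inc(X) → [κ]. Then there exists a graph G containing a 5-subdivision of X as an induced subgraph, and isometric subgraphs H₁, …, H_{κ+1} of G that edge cover G, where each Hᵢ is a tree of radius 2. -/
open SimpleGraph
open scoped Classical

noncomputable instance setFintypeOfFintype {V : Type} [Fintype V] (s : Set V) : Fintype ↥s :=
  (Set.toFinite s).fintype

/-- Treedepth, defined recursively as in the paper. -/
noncomputable def treedepth {V : Type} [Fintype V] (G : SimpleGraph V) : ℕ :=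
  if hV : IsEmpty V then 0
  else if hc : G.Connected then
    1 + ⨅ v : V, treedepth (G.induce {x | x ≠ v})
  else
    ⨆ c : G.ConnectedComponent, treedepth (G.induce c.supp)
termination_by Fintype.card V
decreasing_by
  · have h := Fintype.card_subtype_lt (p := fun x => x ≠ v) (x := v) (by simp)
    convert h using 2
    all_goals rfl
  · obtain ⟨u, _⟩ := Quot.exists_rep c
    by_cases hu : u ∈ c.supp
    · haveI : Nonempty V := not_isEmpty_iff.mp hV
      have hpre : ¬ G.Preconnected := fun hp => hc ⟨hp⟩
      rw [SimpleGraph.Preconnected] at hpre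
      push_neg at hpre
      obtain ⟨a, b, hab⟩ := hpre
      have hor : a ∉ c.supp ∨ b ∉ c.supp := by
        by_contra h
        push_neg at h
        obtain ⟨ha, hb⟩ := h
        rw [SimpleGraph.ConnectedComponent.mem_supp_iff] at ha hb
        exact hab (SimpleGraph.ConnectedComponent.exact (ha.trans hb.symm))
      obtain hx | hx := hor
      · have h := Fintype.card_subtype_lt (p := fun x => x ∈ c.supp) (x := a) hx
        convert h using 2
      · have h := Fintype.card_subtype_lt (p := fun x => x ∈ c.supp) (x := b) hx
        convert h using 2
    · have h := Fintype.card_subtype_lt (p := fun x => x ∈ c.supp) (x := u) hu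
      convert h using 2
/-- A tree decomposition of width at most `k`. -/
def HasTreeDecompositionOfWidthLE {V : Type} (G : SimpleGraph V) (k : ℕ) : Prop :=
  ∃ (ι : Type) (T : SimpleGraph ι) (bag : ι → Finset V),
    T.IsTree ∧
    (∀ v : V, (T.induce {x | v ∈ bag x}).Connected) ∧
    (∀ u v : V, G.Adj u v → ∃ x, u ∈ bag x ∧ v ∈ bag x) ∧
    (∀ x, (bag x).card ≤ k + 1)

/-- Treewidth: minimum width of a tree decomposition. -/
noncomputable def treewidth {V : Type} (G : SimpleGraph V) : ℕ :=
  sInf {k | HasTreeDecompositionOfWidthLE G k}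

/-- A path decomposition of width at most `k`. -/
def HasPathDecompositionOfWidthLE {V : Type} (G : SimpleGraph V) (k : ℕ) : Prop :=
  ∃ (n : ℕ) (bag : Fin n → Finset V),
    (∀ v : V, ((SimpleGraph.pathGraph n).induce {x | v ∈ bag x}).Connected) ∧
    (∀ u v : V, G.Adj u v → ∃ x, u ∈ bag x ∧ v ∈ bag x) ∧
    (∀ x, (bag x).card ≤ k + 1)

/-- Pathwidth: minimum width of a path decomposition. -/
noncomputable def pathwidth {V : Type} (G : SimpleGraph V) : ℕ :=
  sInf {k | HasPathDecompositionOfWidthLE G k}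

/-- The radius of a graph: the least `r` such that some vertex is within distance `r`
of every vertex. -/
noncomputable def graphRadius {V : Type} (G : SimpleGraph V) : ℕ :=
  sInf {r | ∃ u : V, ∀ v : V, G.dist u v ≤ r}

/-- A proper incidence coloring: the two incidences of an edge get different colors, and
incidences at a common vertex get different colors. -/
def IsProperIncidenceColoring {V : Type} (X : SimpleGraph V) {κ : ℕ}
    (φ : V → Sym2 V → Fin κ) : Prop :=
  (∀ u v : V, X.Adj u v → φ u s(u, v) ≠ φ v s(u, v)) ∧
  (∀ u v w : V, X.Adj u v → X.Adj u w → v ≠ w → φ u s(u, v) ≠ φ u s(u, w))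

/-- `H` is isometric in `G`: distances in `H` agree with distances in `G`. -/
def SimpleGraph.Subgraph.IsIsometric {V : Type} {G : SimpleGraph V} (H : G.Subgraph) : Prop :=
  ∀ x y : H.verts, H.coe.dist x y = G.dist x y

/-- A family of subgraphs edge covers `G` if every edge of `G` lies in some member. -/
def EdgeCover {V : Type} {G : SimpleGraph V} {ι : Type} (H : ι → G.Subgraph) : Prop :=
  ∀ u v : V, G.Adj u v → ∃ i, (H i).Adj u v

/-- `A` embeds in `X` as a (not necessarily induced) subgraph. -/
def IsSubgraphEmbeddable {W U : Type} (A : SimpleGraph W) (X : SimpleGraph U) : Prop :=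
  ∃ f : W → U, Function.Injective f ∧ ∀ u v : W, A.Adj u v → X.Adj (f u) (f v)

/-- `H ∈ Apex(X)`: some vertex of `H` can be removed so that every connected component of
the rest is a subgraph of `X`. -/
def InApex {W U : Type} (H : SimpleGraph W) (X : SimpleGraph U) : Prop :=
  ∃ a : W, ∀ c : (H.induce {x | x ≠ a}).ConnectedComponent,
    IsSubgraphEmbeddable ((H.induce {x | x ≠ a}).induce c.supp) X

/-- The star on `Δ+1` vertices with every edge subdivided once:
`none` is the center, `some (i, false)` the subdivision vertices, `some (i, true)` the leaves. -/
def subdividedStar (Δ : ℕ) : SimpleGraph (Option (Fin Δ × Bool)) :=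
  SimpleGraph.fromRel (fun p q =>
    (p = none ∧ ∃ i, q = some (i, false)) ∨
    (∃ i, p = some (i, false) ∧ q = some (i, true)))

/-- `H` is a minor of `G`, witnessed by branch sets. -/
def IsMinorOf {W V : Type} (H : SimpleGraph W) (G : SimpleGraph V) : Prop :=
  ∃ B : W → Set V, (∀ w, (G.induce (B w)).Connected) ∧
    (Pairwise fun w w' => Disjoint (B w) (B w')) ∧
    (∀ w w', H.Adj w w' → ∃ u ∈ B w, ∃ v ∈ B w', G.Adj u v)

/-- The `n × m` grid graph. -/
def gridGraph (n m : ℕ) : SimpleGraph (Fin n × Fin m) :=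
  (SimpleGraph.pathGraph n).boxProd (SimpleGraph.pathGraph m)

/-- The wall of order `n`: the `n × (2n+1)` grid with the vertical edges `(a,b)(a+1,b)`
removed whenever `a` and `b` have different parity. -/
def wall (n : ℕ) : SimpleGraph (Fin n × Fin (2 * n + 1)) :=
  SimpleGraph.fromRel (fun p q =>
    (p.1 = q.1 ∧ p.2.val + 1 = q.2.val) ∨
    (p.2 = q.2 ∧ p.1.val + 1 = q.1.val ∧ p.1.val % 2 = p.2.val % 2))

/-- The graph obtained from `G` by subdividing the edge `uv` once: the edge `uv` is removed
and the new vertex `Sum.inr ()` is joined to `u` and `v`. -/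
def subdivideEdge {V : Type} (G : SimpleGraph V) (u v : V) : SimpleGraph (V ⊕ Unit) :=
  SimpleGraph.fromRel (fun p q =>
    (∃ a b, p = Sum.inl a ∧ q = Sum.inl b ∧ G.Adj a b ∧ s(a, b) ≠ s(u, v)) ∨
    (∃ a, p = Sum.inl a ∧ q = Sum.inr () ∧ (a = u ∨ a = v)))

/-- `H` is a subdivision of `G`. -/
inductive IsSubdivisionOf : {V W : Type} → SimpleGraph V → SimpleGraph W → Prop
  | of_iso {V W : Type} {H : SimpleGraph V} {G : SimpleGraph W} (e : H ≃g G) :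
      IsSubdivisionOf H G
  | step {V W : Type} {H : SimpleGraph V} {G : SimpleGraph W} {u v : W} (huv : G.Adj u v)
      (h : IsSubdivisionOf H (subdivideEdge G u v)) : IsSubdivisionOf H G

/-- The `c`-subdivision of `X`: every edge of `X` is replaced by a path with `c` internal
vertices. The internal vertices of the edge `e` are `Sum.inr (e, 0), …, Sum.inr (e, c-1)`,
ordered from the endpoint `(Quot.out e).1` to the endpoint `(Quot.out e).2`. -/
def csubdivision {V : Type} (X : SimpleGraph V) (c : ℕ) :
    SimpleGraph (V ⊕ (↥X.edgeSet × Fin c)) :=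
  SimpleGraph.fromRel (fun p q =>
    (∃ (u : V) (e : X.edgeSet) (i : Fin c),
        p = Sum.inl u ∧ q = Sum.inr (e, i) ∧
        ((u = (Quot.out (e : Sym2 V)).1 ∧ i.val = 0) ∨
         (u = (Quot.out (e : Sym2 V)).2 ∧ i.val = c - 1))) ∨
    (∃ (e : X.edgeSet) (i j : Fin c), p = Sum.inr (e, i) ∧ q = Sum.inr (e, j) ∧
        i.val + 1 = j.val))
namespace Stmt15Aux

open SimpleGraph

/-! ### Generic lemmas -/

lemma abs_le_walk_length {α : Type} {T : SimpleGraph α} (χ : α → ℤ)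
    (hlip : ∀ u v, T.Adj u v → |χ u - χ v| ≤ 1) :
    ∀ {a b : α} (w : T.Walk a b), |χ a - χ b| ≤ (w.length : ℤ) := by
  intro a b w
  induction w with
  | nil => simp
  | @cons a c b h p ih =>
      have := abs_sub_le (χ a) (χ c) (χ b)
      have h1 := hlip _ _ h
      simp only [SimpleGraph.Walk.length_cons]
      push_cast
      omega

lemma abs_le_dist {α : Type} {T : SimpleGraph α} (hT : T.Connected) (χ : α → ℤ)
    (hlip : ∀ u v, T.Adj u v → |χ u - χ v| ≤ 1) (x y : α) :
    |χ x - χ y| ≤ (T.dist x y : ℤ) := by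
  obtain ⟨w, hw⟩ := hT.exists_walk_length_eq_dist x y
  simpa [hw] using abs_le_walk_length χ hlip w

lemma connected_of_level {α : Type} (T : SimpleGraph α) (r : α) (dep : α → ℕ)
    (hex : ∀ v, v ≠ r → ∃ u, T.Adj u v ∧ dep u < dep v) : T.Connected := by
  have key : ∀ n v, dep v ≤ n → T.Reachable r v := by
    intro n
    induction n with
    | zero =>
        intro v hv
        by_cases h : v = r
        · subst h; exact Reachable.refl _
        · obtain ⟨u, _, hu⟩ := hex v h; omega
    | succ n ih =>
        intro v hv
        by_cases h : v = r
        · subst h; exact Reachable.refl _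
        · obtain ⟨u, hadj, hu⟩ := hex v h
          exact (ih u (by omega)).trans hadj.reachable
  have : Nonempty α := ⟨r⟩
  exact ⟨fun a b => (key (dep a) a le_rfl).symm.trans (key (dep b) b le_rfl)⟩

lemma acyclic_of_level {α : Type} (T : SimpleGraph α) (dep : α → ℕ)
    (hstep : ∀ u v, T.Adj u v → dep u + 1 = dep v ∨ dep v + 1 = dep u)
    (huniq : ∀ u w v, T.Adj u v → T.Adj w v → dep u + 1 = dep v → dep w + 1 = dep v → u = w) :
    T.IsAcyclic := by
  intro v c hc
  obtain ⟨u, hu, hmax⟩ : ∃ u ∈ c.support, ∀ z ∈ c.support, dep z ≤ dep u := by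
    obtain ⟨u, hu, hmax⟩ := c.support.toFinset.exists_max_image dep
      ⟨v, List.mem_toFinset.mpr c.start_mem_support⟩
    exact ⟨u, List.mem_toFinset.mp hu, fun z hz => hmax z (List.mem_toFinset.mpr hz)⟩
  have hcy : (c.rotate u hu).IsCycle := hc.rotate hu
  have hmax' : ∀ z ∈ (c.rotate u hu).support, dep z ≤ dep u := by
    intro z hz
    rw [SimpleGraph.Walk.support_eq_cons] at hz
    rcases List.mem_cons.mp hz with hz | hz
    · exact hz ▸ le_rfl
    · exact hmax z (List.mem_of_mem_tail ((c.support_rotate u hu).mem_iff.mp hz))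
  set c' := c.rotate u hu with hc'
  have hnil : ¬ c'.Nil := hcy.not_nil
  have hdecomp := c'.cons_tail_eq hnil
  set x := c'.getVert 1 with hx
  set q := c'.tail with hq
  have hqcyc : (Walk.cons (SimpleGraph.Walk.adj_snd (p := c') hnil) q).IsCycle := hdecomp.symm ▸ hcy
  rw [SimpleGraph.Walk.cons_isCycle_iff] at hqcyc
  obtain ⟨hqpath, _⟩ := hqcyc
  have hadjux : T.Adj u x := SimpleGraph.Walk.adj_snd (p := c') hnil
  have hxu : x ≠ u := hadjux.ne'
  have hqnil : ¬ q.reverse.Nil := SimpleGraph.Walk.not_nil_of_ne (fun h => hxu h.symm)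
  set y := q.reverse.getVert 1 with hy
  have hadjuy : T.Adj u y := SimpleGraph.Walk.adj_snd (p := q.reverse) hqnil
  have hdecomp2 := q.reverse.cons_tail_eq hqnil
  have pathlen : ∀ {a b : α} (w : T.Walk a b), w.IsPath → a = b → w.length = 0 := by
    intro a b w hw hab
    subst hab
    rw [(SimpleGraph.Walk.isPath_iff_eq_nil (p := w)).mp hw]
    rfl
  have hyx : y ≠ x := by
    intro hyx
    have hq2path : q.reverse.tail.IsPath := by
      have := hqpath.reverse
      rw [← hdecomp2] at this
      exact this.of_cons
    have hlq : q.reverse.tail.length = 0 := pathlen _ hq2path hyx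
    have h1 : q.reverse.length = 1 := by
      have := SimpleGraph.Walk.length_tail_add_one hqnil
      omega
    have h2 : q.length = 1 := by rwa [SimpleGraph.Walk.length_reverse] at h1
    have h3 : c'.length = 2 := by
      have h4 := SimpleGraph.Walk.length_tail_add_one hnil
      rw [← hq] at h4
      omega
    have := hcy.three_le_length
    omega
  have hxmem : x ∈ c'.support := by
    rw [← hdecomp, SimpleGraph.Walk.support_cons]
    exact List.mem_cons_of_mem _ q.start_mem_support
  have hymem : y ∈ c'.support := by
    have : y ∈ q.reverse.support := by
      rw [← hdecomp2, SimpleGraph.Walk.support_cons]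
      exact List.mem_cons_of_mem _ (q.reverse.tail.start_mem_support)
    rw [SimpleGraph.Walk.support_reverse, List.mem_reverse] at this
    rw [← hdecomp, SimpleGraph.Walk.support_cons]
    exact List.mem_cons_of_mem _ this
  have hdx : dep x + 1 = dep u := by
    rcases hstep u x hadjux with h | h
    · have := hmax' x hxmem; omega
    · exact h
  have hdy : dep y + 1 = dep u := by
    rcases hstep u y hadjuy with h | h
    · have := hmax' y hymem; omega
    · exact h
  exact hyx (huniq y x u hadjuy.symm hadjux.symm hdy hdx)

lemma isometric_of_retract {α : Type} {G : SimpleGraph α} (H : G.Subgraph)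
    (hconn : H.coe.Connected) (r : α → α)
    (hmem : ∀ a, r a ∈ H.verts) (hfix : ∀ a ∈ H.verts, r a = a)
    (hhom : ∀ a b, G.Adj a b → r a = r b ∨ H.Adj (r a) (r b)) :
    H.IsIsometric := by
  intro x y
  apply le_antisymm
  · have key : ∀ {a b : α} (w : G.Walk a b),
        H.coe.dist ⟨r a, hmem a⟩ ⟨r b, hmem b⟩ ≤ w.length := by
      intro a b w
      induction w with
      | nil => simp [SimpleGraph.dist_self]
      | @cons a c b h p ih =>
          have h1 : H.coe.dist ⟨r a, hmem a⟩ ⟨r c, hmem c⟩ ≤ 1 := by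
            rcases hhom a c h with heq | hadj
            · have : (⟨r a, hmem a⟩ : H.verts) = ⟨r c, hmem c⟩ := Subtype.ext heq
              rw [this, SimpleGraph.dist_self]
              omega
            · have : H.coe.Adj ⟨r a, hmem a⟩ ⟨r c, hmem c⟩ := hadj
              exact le_of_eq (SimpleGraph.dist_eq_one_iff_adj.mpr this)
          calc H.coe.dist ⟨r a, hmem a⟩ ⟨r b, hmem b⟩
              ≤ H.coe.dist ⟨r a, hmem a⟩ ⟨r c, hmem c⟩
                + H.coe.dist ⟨r c, hmem c⟩ ⟨r b, hmem b⟩ := hconn.dist_triangle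
            _ ≤ 1 + p.length := Nat.add_le_add h1 ih
            _ = (SimpleGraph.Walk.cons h p).length := by
                rw [SimpleGraph.Walk.length_cons]; omega
    have hreach : G.Reachable (x : α) (y : α) := by
      obtain ⟨w⟩ := hconn x y
      exact ⟨w.map H.hom⟩
    obtain ⟨w, hw⟩ := hreach.exists_walk_length_eq_dist
    have hkey := key w
    have hx : (⟨r ↑x, hmem ↑x⟩ : H.verts) = x := Subtype.ext (hfix ↑x x.2)
    have hy : (⟨r ↑y, hmem ↑y⟩ : H.verts) = y := Subtype.ext (hfix ↑y y.2)
    rw [hx, hy, hw] at hkey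
    exact hkey
  · obtain ⟨w, hw⟩ := hconn.exists_walk_length_eq_dist x y
    have h2 : G.dist ↑x ↑y ≤ (w.map H.hom).length := SimpleGraph.dist_le _
    rwa [SimpleGraph.Walk.length_map, hw] at h2



section Construction

variable {V : Type} (X : SimpleGraph V) (κ : ℕ) (φ : V → Sym2 V → Fin κ)

/-- Vertex type: subdivision vertices plus, for each of the `κ+1` colors, an apex
vertex `(i,0)` and two pendant paths `(i,0)-(i,1)-(i,2)` and `(i,0)-(i,3)-(i,4)`. -/
abbrev WW := (V ⊕ (↥X.edgeSet × Fin 5)) ⊕ (Fin (κ + 1) × Fin 5)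

noncomputable def o1 (e : X.edgeSet) : V := (Quot.out (e : Sym2 V)).1
noncomputable def o2 (e : X.edgeSet) : V := (Quot.out (e : Sym2 V)).2

lemma out_mk (e : X.edgeSet) : s(o1 X e, o2 X e) = (e : Sym2 V) := by
  exact Quot.out_eq (e : Sym2 V)

lemma adj_o (e : X.edgeSet) : X.Adj (o1 X e) (o2 X e) := by
  rw [← SimpleGraph.mem_edgeSet, out_mk]
  exact e.2

lemma o_ne (e : X.edgeSet) : o1 X e ≠ o2 X e := (adj_o X e).ne

lemma csub_adj_inl_inr {u : V} {e : X.edgeSet} {k : Fin 5} :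
    (csubdivision X 5).Adj (Sum.inl u) (Sum.inr (e, k)) ↔
      (u = o1 X e ∧ k = 0) ∨ (u = o2 X e ∧ k = 4) := by
  rw [csubdivision, SimpleGraph.fromRel_adj]
  constructor
  · rintro ⟨-, h | h⟩
    · rcases h with ⟨u', e', k', h1, h2, h⟩ | ⟨e', i', j', h1, h2, h3⟩
      · simp only [Sum.inl.injEq, Sum.inr.injEq, Prod.mk.injEq] at h1 h2
        obtain rfl := h1
        obtain ⟨rfl, rfl⟩ := h2
        rcases h with ⟨h, hk⟩ | ⟨h, hk⟩
        · exact Or.inl ⟨h, by rw [Fin.ext_iff]; simpa using hk⟩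
        · exact Or.inr ⟨h, by rw [Fin.ext_iff]; simp at hk ⊢; omega⟩
      · simp at h1
    · rcases h with ⟨u', e', k', h1, h2, h⟩ | ⟨e', i', j', h1, h2, h3⟩
      · simp at h1
      · simp at h2
  · rintro (⟨hu, hk⟩ | ⟨hu, hk⟩)
    · exact ⟨by simp, Or.inl (Or.inl ⟨u, e, k, rfl, rfl, Or.inl ⟨hu, by simp [hk]⟩⟩)⟩
    · refine ⟨by simp, Or.inl (Or.inl ⟨u, e, k, rfl, rfl, Or.inr ⟨hu, ?_⟩⟩)⟩
      subst hk; rfl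

lemma csub_adj_inr_inr {e e' : X.edgeSet} {k k' : Fin 5} :
    (csubdivision X 5).Adj (Sum.inr (e, k)) (Sum.inr (e', k')) ↔
      e = e' ∧ (k.val + 1 = k'.val ∨ k'.val + 1 = k.val) := by
  rw [csubdivision, SimpleGraph.fromRel_adj]
  constructor
  · rintro ⟨hne, h | h⟩
    · rcases h with ⟨u', e'', k'', h1, h2, h⟩ | ⟨e'', i', j', h1, h2, h3⟩
      · simp at h1
      · simp only [Sum.inr.injEq, Prod.mk.injEq] at h1 h2
        obtain ⟨rfl, rfl⟩ := h1
        obtain ⟨rfl, rfl⟩ := h2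
        exact ⟨rfl, Or.inl h3⟩
    · rcases h with ⟨u', e'', k'', h1, h2, h⟩ | ⟨e'', i', j', h1, h2, h3⟩
      · simp at h1
      · simp only [Sum.inr.injEq, Prod.mk.injEq] at h1 h2
        obtain ⟨rfl, rfl⟩ := h1
        obtain ⟨rfl, rfl⟩ := h2
        exact ⟨rfl, Or.inr h3⟩
  · rintro ⟨rfl, h | h⟩
    · refine ⟨by simp [Prod.ext_iff, Fin.ext_iff]; omega,
        Or.inl (Or.inr ⟨e, k, k', rfl, rfl, h⟩)⟩
    · refine ⟨by simp [Prod.ext_iff, Fin.ext_iff]; omega,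
        Or.inr (Or.inr ⟨e, k', k, rfl, rfl, h⟩)⟩

lemma csub_not_adj_inl_inl {u u' : V} :
    ¬ (csubdivision X 5).Adj (Sum.inl u) (Sum.inl u') := by
  rw [csubdivision, SimpleGraph.fromRel_adj]
  rintro ⟨-, h | h⟩ <;>
    rcases h with ⟨u', e', k', h1, h2, h⟩ | ⟨e', i', j', h1, h2, h3⟩ <;> simp_all

def M (i : Fin (κ + 1)) : Set (↥X.edgeSet × Fin 5) :=
  {m | (m.2 = 0 ∧ (φ (o1 X m.1) (m.1 : Sym2 V)).castSucc = i) ∨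
       (m.2 = 4 ∧ (φ (o2 X m.1) (m.1 : Sym2 V)).castSucc = i) ∨
       (m.2 = 2 ∧ i = Fin.last κ)}

def apexW (i : Fin (κ + 1)) : WW X κ := Sum.inr (i, 0)

def dRel : Fin 5 → Fin 5 → Prop := fun k l =>
  (k = 0 ∧ l = 1) ∨ (k = 1 ∧ l = 2) ∨ (k = 0 ∧ l = 3) ∨ (k = 3 ∧ l = 4)

instance : DecidableRel dRel := fun _ _ => by unfold dRel; infer_instance

lemma dRel_ne : ∀ k l : Fin 5, dRel k l → k ≠ l := by decide

lemma dRel_unique : ∀ k k' l : Fin 5, dRel k l → dRel k' l → k = k' := by decide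

def Rbig : WW X κ → WW X κ → Prop := fun x y =>
  (∃ p q, x = Sum.inl p ∧ y = Sum.inl q ∧ (csubdivision X 5).Adj p q) ∨
  (∃ m c, x = Sum.inl (Sum.inr m) ∧ y = Sum.inr (c, 0) ∧ m ∈ M X κ φ c) ∨
  (∃ c k l, x = Sum.inr (c, k) ∧ y = Sum.inr (c, l) ∧ dRel k l)

def GG : SimpleGraph (WW X κ) := SimpleGraph.fromRel (Rbig X κ φ)

lemma GG_adj_inl_inl {p q : V ⊕ (↥X.edgeSet × Fin 5)} :
    (GG X κ φ).Adj (Sum.inl p) (Sum.inl q) ↔ (csubdivision X 5).Adj p q := by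
  rw [GG, SimpleGraph.fromRel_adj]
  constructor
  · rintro ⟨hne, h | h⟩ <;>
    · rcases h with ⟨p', q', h1, h2, h⟩ | ⟨m, c, h1, h2, h⟩ | ⟨c, k, l, h1, h2, h⟩
      · simp only [Sum.inl.injEq] at h1 h2
        subst h1; subst h2
        first | exact h | exact h.symm
      · simp at h2
      · simp at h1
  · intro h
    exact ⟨by simpa using h.ne, Or.inl (Or.inl ⟨p, q, rfl, rfl, h⟩)⟩

lemma GG_adj_apex {m : ↥X.edgeSet × Fin 5} {c : Fin (κ + 1)} (h : m ∈ M X κ φ c) :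
    (GG X κ φ).Adj (Sum.inl (Sum.inr m)) (Sum.inr (c, 0)) := by
  rw [GG, SimpleGraph.fromRel_adj]
  exact ⟨by simp, Or.inl (Or.inr (Or.inl ⟨m, c, rfl, rfl, h⟩))⟩

lemma GG_adj_dummy {c : Fin (κ + 1)} {k l : Fin 5} (h : dRel k l) :
    (GG X κ φ).Adj (Sum.inr (c, k)) (Sum.inr (c, l)) := by
  rw [GG, SimpleGraph.fromRel_adj]
  exact ⟨by simp [dRel_ne k l h], Or.inl (Or.inr (Or.inr ⟨c, k, l, rfl, rfl, h⟩))⟩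

def HRel (i : Fin (κ + 1)) : WW X κ → WW X κ → Prop := fun x y =>
  (∃ m q, m ∈ M X κ φ i ∧ x = Sum.inl (Sum.inr m) ∧ y = Sum.inl q ∧
      (csubdivision X 5).Adj (Sum.inr m) q) ∨
  (∃ m, m ∈ M X κ φ i ∧ x = apexW X κ i ∧ y = Sum.inl (Sum.inr m)) ∨
  (∃ k l, x = Sum.inr (i, k) ∧ y = Sum.inr (i, l) ∧ dRel k l)

lemma HRel_adj {i : Fin (κ + 1)} {x y : WW X κ} (h : HRel X κ φ i x y) :
    (GG X κ φ).Adj x y := by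
  rcases h with ⟨m, q, hm, rfl, rfl, h⟩ | ⟨m, hm, rfl, rfl⟩ | ⟨k, l, rfl, rfl, h⟩
  · exact (GG_adj_inl_inl X κ φ).mpr h
  · exact (GG_adj_apex X κ φ hm).symm
  · exact GG_adj_dummy X κ φ h

def Htree (i : Fin (κ + 1)) : (GG X κ φ).Subgraph where
  verts := {x | x = apexW X κ i ∨ ∃ y, HRel X κ φ i x y ∨ HRel X κ φ i y x}
  Adj := fun x y => HRel X κ φ i x y ∨ HRel X κ φ i y x
  adj_sub := by
    rintro u v (h | h)
    · exact HRel_adj X κ φ h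
    · exact (HRel_adj X κ φ h).symm
  edge_vert := by
    intro u v h
    exact Or.inr ⟨v, h⟩
  symm := by
    refine ⟨?_⟩
    intro u v h
    exact h.symm

lemma M_snd {i : Fin (κ + 1)} {m : ↥X.edgeSet × Fin 5} (h : m ∈ M X κ φ i) :
    m.2 = 0 ∨ m.2 = 2 ∨ m.2 = 4 := by
  rcases h with ⟨h, -⟩ | ⟨h, -⟩ | ⟨h, -⟩
  · exact Or.inl h
  · exact Or.inr (Or.inr h)
  · exact Or.inr (Or.inl h)

lemma M_val {i : Fin (κ + 1)} {m : ↥X.edgeSet × Fin 5} (h : m ∈ M X κ φ i) :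
    m.2.val = 0 ∨ m.2.val = 2 ∨ m.2.val = 4 := by
  rcases M_snd X κ φ h with h | h | h <;> rw [h] <;> decide

lemma M_zero_iff {i : Fin (κ + 1)} {e : X.edgeSet} :
    ((e, (0 : Fin 5)) ∈ M X κ φ i) ↔ (φ (o1 X e) (e : Sym2 V)).castSucc = i := by
  constructor
  · rintro (⟨-, h⟩ | ⟨h, -⟩ | ⟨h, -⟩)
    · exact h
    · exact absurd h (show (0 : Fin 5) ≠ 4 by decide)
    · exact absurd h (show (0 : Fin 5) ≠ 2 by decide)
  · intro h
    exact Or.inl ⟨rfl, h⟩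

lemma M_four_iff {i : Fin (κ + 1)} {e : X.edgeSet} :
    ((e, (4 : Fin 5)) ∈ M X κ φ i) ↔ (φ (o2 X e) (e : Sym2 V)).castSucc = i := by
  constructor
  · rintro (⟨h, -⟩ | ⟨-, h⟩ | ⟨h, -⟩)
    · exact absurd h (show (4 : Fin 5) ≠ 0 by decide)
    · exact h
    · exact absurd h (show (4 : Fin 5) ≠ 2 by decide)
  · intro h
    exact Or.inr (Or.inl ⟨rfl, h⟩)

lemma M_two_iff {i : Fin (κ + 1)} {e : X.edgeSet} :
    ((e, (2 : Fin 5)) ∈ M X κ φ i) ↔ i = Fin.last κ := by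
  constructor
  · rintro (⟨h, -⟩ | ⟨h, -⟩ | ⟨-, h⟩)
    · exact absurd h (show (2 : Fin 5) ≠ 0 by decide)
    · exact absurd h (show (2 : Fin 5) ≠ 4 by decide)
    · exact h
  · intro h
    exact Or.inr (Or.inr ⟨rfl, h⟩)

lemma M_val2_last {i : Fin (κ + 1)} {m : ↥X.edgeSet × Fin 5} (h : m ∈ M X κ φ i)
    (h2 : m.2 = 2) : i = Fin.last κ := by
  rcases h with ⟨h, -⟩ | ⟨h, -⟩ | ⟨-, h⟩
  · rw [h2] at h; exact absurd h (by decide)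
  · rw [h2] at h; exact absurd h (by decide)
  · exact h

lemma M_not_last {i : Fin (κ + 1)} {m : ↥X.edgeSet × Fin 5} (h : m ∈ M X κ φ i)
    (h2 : m.2 = 0 ∨ m.2 = 4) : i ≠ Fin.last κ := by
  rcases h with ⟨-, h⟩ | ⟨-, h⟩ | ⟨h, -⟩
  · exact h ▸ (Fin.castSucc_lt_last _).ne
  · exact h ▸ (Fin.castSucc_lt_last _).ne
  · rcases h2 with h2 | h2 <;> rw [h] at h2 <;> exact absurd h2 (by decide)

lemma M_not_both (hφ : IsProperIncidenceColoring X φ) {i : Fin (κ + 1)} {e : X.edgeSet}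
    (h0 : (e, (0 : Fin 5)) ∈ M X κ φ i) (h4 : (e, (4 : Fin 5)) ∈ M X κ φ i) : False := by
  rw [M_zero_iff] at h0
  rw [M_four_iff] at h4
  have heq : φ (o1 X e) (e : Sym2 V) = φ (o2 X e) (e : Sym2 V) :=
    Fin.castSucc_injective κ (h0.trans h4.symm)
  have := hφ.1 (o1 X e) (o2 X e) (adj_o X e)
  rw [out_mk] at this
  exact this heq

lemma M_adj_V (hφ : IsProperIncidenceColoring X φ) {i : Fin (κ + 1)} {u0 : V}
    {m m' : ↥X.edgeSet × Fin 5} (hm : m ∈ M X κ φ i) (hm' : m' ∈ M X κ φ i)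
    (ha : (csubdivision X 5).Adj (Sum.inr m) (Sum.inl u0))
    (ha' : (csubdivision X 5).Adj (Sum.inr m') (Sum.inl u0)) : m = m' := by
  have sig : ∀ (e : X.edgeSet) (k : Fin 5), (e, k) ∈ M X κ φ i →
      ((u0 = o1 X e ∧ k = 0) ∨ (u0 = o2 X e ∧ k = 4)) →
      ∃ w, X.Adj u0 w ∧ (e : Sym2 V) = s(u0, w) ∧ (φ u0 (e : Sym2 V)).castSucc = i := by
    rintro e k hk (⟨hu, rfl⟩ | ⟨hu, rfl⟩)
    · rw [M_zero_iff] at hk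
      exact ⟨o2 X e, hu ▸ adj_o X e, by rw [hu, out_mk], by rw [hu]; exact hk⟩
    · rw [M_four_iff] at hk
      refine ⟨o1 X e, hu ▸ (adj_o X e).symm, ?_, by rw [hu]; exact hk⟩
      rw [hu, Sym2.eq_swap, out_mk]
  obtain ⟨e, k⟩ := m
  obtain ⟨e', k'⟩ := m'
  have h1 := (csub_adj_inl_inr X).mp ha.symm
  have h1' := (csub_adj_inl_inr X).mp ha'.symm
  obtain ⟨w, hw, he, hc⟩ := sig e k hm h1
  obtain ⟨w', hw', he', hc'⟩ := sig e' k' hm' h1'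
  have hφeq : φ u0 (e : Sym2 V) = φ u0 (e' : Sym2 V) :=
    Fin.castSucc_injective κ (hc.trans hc'.symm)
  by_cases hww : w = w'
  · have hee : e = e' := Subtype.ext (by rw [he, he', hww])
    subst hee
    rcases h1 with ⟨hu, rfl⟩ | ⟨hu, rfl⟩ <;> rcases h1' with ⟨hu', rfl⟩ | ⟨hu', rfl⟩
    · rfl
    · exact absurd (hu.symm.trans hu') (o_ne X e)
    · exact absurd (hu'.symm.trans hu) (o_ne X e)
    · rfl
  · exact absurd hφeq (by rw [he, he']; exact hφ.2 u0 w w' hw hw' hww)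

noncomputable def depW (i : Fin (κ + 1)) : WW X κ → ℕ
  | Sum.inl (Sum.inl _) => 2
  | Sum.inl (Sum.inr m) => if m ∈ M X κ φ i then 1 else 2
  | Sum.inr (c, k) => if c = i then (if k = 0 then 0 else if k = 1 ∨ k = 3 then 1 else 2) else 2

lemma depW_apex (i : Fin (κ + 1)) : depW X κ φ i (apexW X κ i) = 0 := by
  simp [depW, apexW]

lemma depW_eq_zero {i : Fin (κ + 1)} {x : WW X κ} (h : depW X κ φ i x = 0) :
    x = apexW X κ i := by
  rcases x with (u | m) | ⟨c, k⟩
  · simp [depW] at h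
  · simp only [depW] at h; split_ifs at h <;> omega
  · simp only [depW] at h
    split_ifs at h with h1 h2
    · rw [apexW, h1, h2]
    all_goals omega

lemma HRel_dep {i : Fin (κ + 1)} {x y : WW X κ} (h : HRel X κ φ i x y) :
    depW X κ φ i x + 1 = depW X κ φ i y := by
  rcases h with ⟨m, q, hm, rfl, rfl, h⟩ | ⟨m, hm, rfl, rfl⟩ | ⟨k, l, rfl, rfl, h⟩
  · have hx : depW X κ φ i (Sum.inl (Sum.inr m)) = 1 := by simp [depW, hm]
    rcases q with u | m'
    · rw [hx]; simp [depW]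
    · obtain ⟨e, k⟩ := m
      obtain ⟨e', k'⟩ := m'
      rw [csub_adj_inr_inr] at h
      obtain ⟨rfl, hk⟩ := h
      have hnot : (e, k') ∉ M X κ φ i := by
        intro hmem
        have v1 := M_val X κ φ hm
        have v2 := M_val X κ φ hmem
        simp only at v1 v2
        omega
      rw [hx]; simp [depW, hnot]
  · rw [depW_apex]; simp [depW, hm]
  · rcases h with ⟨rfl, rfl⟩ | ⟨rfl, rfl⟩ | ⟨rfl, rfl⟩ | ⟨rfl, rfl⟩ <;>
      simp [depW, Fin.ext_iff] <;> decide

lemma HRel_src {i : Fin (κ + 1)} {x y : WW X κ} (h : HRel X κ φ i x y) :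
    x = apexW X κ i ∨ HRel X κ φ i (apexW X κ i) x := by
  rcases h with ⟨m, q, hm, rfl, -, -⟩ | ⟨m, hm, rfl, rfl⟩ | ⟨k, l, rfl, rfl, h⟩
  · exact Or.inr (Or.inr (Or.inl ⟨m, hm, rfl, rfl⟩))
  · exact Or.inl rfl
  · rcases h with ⟨rfl, rfl⟩ | ⟨rfl, rfl⟩ | ⟨rfl, rfl⟩ | ⟨rfl, rfl⟩
    · exact Or.inl rfl
    · exact Or.inr (Or.inr (Or.inr ⟨0, 1, rfl, rfl, Or.inl ⟨rfl, rfl⟩⟩))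
    · exact Or.inl rfl
    · exact Or.inr (Or.inr (Or.inr ⟨0, 3, rfl, rfl, Or.inr (Or.inr (Or.inl ⟨rfl, rfl⟩))⟩))

lemma HRel_parent_unique (hφ : IsProperIncidenceColoring X φ) {i : Fin (κ + 1)}
    {u w v : WW X κ} (h : HRel X κ φ i u v) (h' : HRel X κ φ i w v) : u = w := by
  rcases h with ⟨m, q, hm, rfl, rfl, ha⟩ | ⟨m, hm, rfl, rfl⟩ | ⟨k, l, rfl, hv, hd⟩
  · rcases h' with ⟨m', q', hm', rfl, hq', ha'⟩ | ⟨m', hm', rfl, hq'⟩ | ⟨k', l', hw, hv', hd'⟩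
    · -- both case 1
      obtain rfl : q' = q := (Sum.inl_injective hq').symm
      rcases q' with u0 | m''
      · rw [M_adj_V X κ φ hφ hm hm' ha ha']
      · obtain ⟨e, k⟩ := m
        obtain ⟨e', k'⟩ := m'
        obtain ⟨e'', k''⟩ := m''
        rw [csub_adj_inr_inr] at ha ha'
        obtain ⟨rfl, hk⟩ := ha
        obtain ⟨rfl, hk'⟩ := ha'
        have v1 := M_val X κ φ hm
        have v2 := M_val X κ φ hm'
        simp only at v1 v2
        by_cases hab : k.val = k'.val
        · rw [show k = k' from Fin.ext hab]
        · exfalso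
          have h2 : (k.val = 2 ∧ (k'.val = 0 ∨ k'.val = 4)) ∨
              (k'.val = 2 ∧ (k.val = 0 ∨ k.val = 4)) := by omega
          rcases h2 with ⟨hk2, hk4⟩ | ⟨hk2, hk4⟩
          · exact M_not_last X κ φ hm'
              (by rcases hk4 with h | h
                  · exact Or.inl (Fin.ext h)
                  · exact Or.inr (Fin.ext h))
              (M_val2_last X κ φ hm (Fin.ext hk2))
          · exact M_not_last X κ φ hm
              (by rcases hk4 with h | h
                  · exact Or.inl (Fin.ext h)
                  · exact Or.inr (Fin.ext h))
              (M_val2_last X κ φ hm' (Fin.ext hk2))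
    · -- case 1 vs case 2 : v = inl (inr m') with m' ∈ M i and csub.Adj (inr m) (inr m')
      exfalso
      obtain rfl : q = Sum.inr m' := Sum.inl_injective hq'
      obtain ⟨e, k⟩ := m
      obtain ⟨e', k'⟩ := m'
      rw [csub_adj_inr_inr] at ha
      obtain ⟨rfl, hk⟩ := ha
      have v1 := M_val X κ φ hm
      have v2 := M_val X κ φ hm'
      simp only at v1 v2
      omega
    · exact absurd hv' (by simp)
  · rcases h' with ⟨m', q', hm', rfl, hq', ha'⟩ | ⟨m', hm', rfl, hq'⟩ | ⟨k', l', hw, hv', hd'⟩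
    · -- case 2 vs case 1
      exfalso
      obtain rfl : q' = Sum.inr m := (Sum.inl_injective hq'.symm)
      obtain ⟨e, k⟩ := m
      obtain ⟨e', k'⟩ := m'
      rw [csub_adj_inr_inr] at ha'
      obtain ⟨rfl, hk⟩ := ha'
      have v1 := M_val X κ φ hm
      have v2 := M_val X κ φ hm'
      simp only at v1 v2
      omega
    · rfl
    · exact absurd hv' (by simp)
  · rcases h' with ⟨m', q', hm', rfl, hq', ha'⟩ | ⟨m', hm', rfl, hq'⟩ | ⟨k', l', hw, hv', hd'⟩
    · exact absurd (hv.symm.trans hq') (by simp)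
    · exact absurd (hv.symm.trans hq') (by simp)
    · obtain rfl : l' = l := by
        have := hv.symm.trans hv'
        simp only [Sum.inr.injEq, Prod.mk.injEq] at this
        exact this.2.symm
      rw [hw, dRel_unique k k' l' hd hd']

def inL2 (i : Fin (κ + 1)) (u : V) : Prop :=
  ∃ m, m ∈ M X κ φ i ∧ (csubdivision X 5).Adj (Sum.inr m) (Sum.inl u)

noncomputable def pr (i : Fin (κ + 1)) (u : V) : WW X κ :=
  if h : inL2 X κ φ i u then Sum.inl (Sum.inr h.choose) else apexW X κ i

lemma pr_spec (i : Fin (κ + 1)) (u : V) :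
    (¬ inL2 X κ φ i u ∧ pr X κ φ i u = apexW X κ i) ∨
    (∃ m, m ∈ M X κ φ i ∧ (csubdivision X 5).Adj (Sum.inr m) (Sum.inl u) ∧
      pr X κ φ i u = Sum.inl (Sum.inr m)) := by
  unfold pr
  split_ifs with h
  · exact Or.inr ⟨h.choose, h.choose_spec.1, h.choose_spec.2, rfl⟩
  · exact Or.inl ⟨h, rfl⟩

noncomputable def rW (i : Fin (κ + 1)) : WW X κ → WW X κ
  | Sum.inl (Sum.inl u) => if inL2 X κ φ i u then Sum.inl (Sum.inl u) else apexW X κ i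
  | Sum.inl (Sum.inr (e, k)) =>
      if i = Fin.last κ then Sum.inl (Sum.inr (e, if k = 0 ∨ k = 4 then 2 else k))
      else if (e, (0 : Fin 5)) ∈ M X κ φ i then
        (if k = 0 ∨ k = 2 then Sum.inl (Sum.inr (e, 0))
         else if k = 1 then Sum.inl (Sum.inr (e, 1))
         else if k = 3 then apexW X κ i
         else pr X κ φ i (o2 X e))
      else if (e, (4 : Fin 5)) ∈ M X κ φ i then
        (if k = 4 ∨ k = 2 then Sum.inl (Sum.inr (e, 4))
         else if k = 3 then Sum.inl (Sum.inr (e, 3))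
         else if k = 1 then apexW X κ i
         else pr X κ φ i (o1 X e))
      else
        (if k = 0 then pr X κ φ i (o1 X e)
         else if k = 4 then pr X κ φ i (o2 X e)
         else apexW X κ i)
  | Sum.inr (c, k) => if c = i then Sum.inr (c, k) else apexW X κ i

lemma apex_mem (i : Fin (κ + 1)) : apexW X κ i ∈ (Htree X κ φ i).verts := Or.inl rfl

lemma M_mem_verts {i : Fin (κ + 1)} {m : ↥X.edgeSet × Fin 5} (hm : m ∈ M X κ φ i) :
    Sum.inl (Sum.inr m) ∈ (Htree X κ φ i).verts :=
  Or.inr ⟨apexW X κ i, Or.inr (Or.inr (Or.inl ⟨m, hm, rfl, rfl⟩))⟩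

lemma adjM_mem_verts {i : Fin (κ + 1)} {m : ↥X.edgeSet × Fin 5}
    {q : V ⊕ (↥X.edgeSet × Fin 5)} (hm : m ∈ M X κ φ i)
    (hadj : (csubdivision X 5).Adj (Sum.inr m) q) :
    Sum.inl q ∈ (Htree X κ φ i).verts :=
  Or.inr ⟨Sum.inl (Sum.inr m), Or.inr (Or.inl ⟨m, q, hm, rfl, rfl, hadj⟩)⟩

lemma csub_adj_mid (e : X.edgeSet) {a b : Fin 5} (h : a.val + 1 = b.val ∨ b.val + 1 = a.val) :
    (csubdivision X 5).Adj (Sum.inr (e, a)) (Sum.inr (e, b)) :=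
  (csub_adj_inr_inr X).mpr ⟨rfl, h⟩

lemma mid_mem_verts {i : Fin (κ + 1)} {e : X.edgeSet} {k j : Fin 5} (hm : (e, k) ∈ M X κ φ i)
    (h : k.val + 1 = j.val ∨ j.val + 1 = k.val) :
    Sum.inl (Sum.inr (e, j)) ∈ (Htree X κ φ i).verts :=
  adjM_mem_verts X κ φ hm (csub_adj_mid X e h)

lemma dummy_mem (i : Fin (κ + 1)) (k : Fin 5) : Sum.inr (i, k) ∈ (Htree X κ φ i).verts := by
  fin_cases k
  · exact Or.inl rfl
  · exact Or.inr ⟨Sum.inr (i, 0), Or.inr (Or.inr (Or.inr ⟨0, 1, rfl, rfl, Or.inl ⟨rfl, rfl⟩⟩))⟩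
  · exact Or.inr ⟨Sum.inr (i, 1), Or.inr (Or.inr (Or.inr
      ⟨1, 2, rfl, rfl, Or.inr (Or.inl ⟨rfl, rfl⟩)⟩))⟩
  · exact Or.inr ⟨Sum.inr (i, 0), Or.inr (Or.inr (Or.inr
      ⟨0, 3, rfl, rfl, Or.inr (Or.inr (Or.inl ⟨rfl, rfl⟩))⟩))⟩
  · exact Or.inr ⟨Sum.inr (i, 3), Or.inr (Or.inr (Or.inr
      ⟨3, 4, rfl, rfl, Or.inr (Or.inr (Or.inr ⟨rfl, rfl⟩))⟩))⟩

lemma verts_cases {i : Fin (κ + 1)} {x : WW X κ} (hx : x ∈ (Htree X κ φ i).verts) :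
    x = apexW X κ i ∨ (∃ m, m ∈ M X κ φ i ∧ x = Sum.inl (Sum.inr m)) ∨
    (∃ m q, m ∈ M X κ φ i ∧ x = Sum.inl q ∧ (csubdivision X 5).Adj (Sum.inr m) q) ∨
    (∃ k, x = Sum.inr (i, k)) := by
  rcases hx with h | ⟨y, h | h⟩
  · exact Or.inl h
  · rcases h with ⟨m, q, hm, rfl, -, -⟩ | ⟨m, hm, rfl, -⟩ | ⟨k, l, rfl, -, -⟩
    · exact Or.inr (Or.inl ⟨m, hm, rfl⟩)
    · exact Or.inl rfl
    · exact Or.inr (Or.inr (Or.inr ⟨k, rfl⟩))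
  · rcases h with ⟨m, q, hm, -, rfl, hadj⟩ | ⟨m, hm, -, rfl⟩ | ⟨k, l, -, rfl, -⟩
    · exact Or.inr (Or.inr (Or.inl ⟨m, q, hm, rfl, hadj⟩))
    · exact Or.inr (Or.inl ⟨m, hm, rfl⟩)
    · exact Or.inr (Or.inr (Or.inr ⟨l, rfl⟩))

lemma pr_mem (i : Fin (κ + 1)) (u : V) : pr X κ φ i u ∈ (Htree X κ φ i).verts := by
  rcases pr_spec X κ φ i u with ⟨-, h⟩ | ⟨m, hm, -, h⟩
  · rw [h]; exact apex_mem X κ φ i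
  · rw [h]; exact M_mem_verts X κ φ hm

lemma rW_mem (i : Fin (κ + 1)) (x : WW X κ) : rW X κ φ i x ∈ (Htree X κ φ i).verts := by
  rcases x with (u | ⟨e, k⟩) | ⟨c, k⟩
  · simp only [rW]
    split_ifs with h
    · obtain ⟨m, hm, hadj⟩ := h
      exact adjM_mem_verts X κ φ hm hadj
    · exact apex_mem X κ φ i
  · simp only [rW]
    by_cases h1 : i = Fin.last κ
    · rw [if_pos h1]
      by_cases h2 : k = 0 ∨ k = 4
      · rw [if_pos h2]
        exact M_mem_verts X κ φ ((M_two_iff X κ φ).mpr h1)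
      · rw [if_neg h2]
        by_cases hk2 : k = 2
        · subst hk2; exact M_mem_verts X κ φ ((M_two_iff X κ φ).mpr h1)
        · refine mid_mem_verts X κ φ ((M_two_iff X κ φ).mpr h1) ?_
          have hb := k.isLt
          have h0' : k.val ≠ 0 := fun h => h2 (Or.inl (Fin.ext h))
          have h4' : k.val ≠ 4 := fun h => h2 (Or.inr (Fin.ext h))
          have h2' : k.val ≠ 2 := fun h => hk2 (Fin.ext h)
          simp only [show ((2 : Fin 5) : ℕ) = 2 from rfl]
          omega
    · rw [if_neg h1]
      by_cases h2 : (e, (0 : Fin 5)) ∈ M X κ φ i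
      · rw [if_pos h2]
        by_cases h3 : k = 0 ∨ k = 2
        · rw [if_pos h3]; exact M_mem_verts X κ φ h2
        · rw [if_neg h3]
          by_cases h4 : k = 1
          · rw [if_pos h4]; exact mid_mem_verts X κ φ h2 (by decide)
          · rw [if_neg h4]
            by_cases h5 : k = 3
            · rw [if_pos h5]; exact apex_mem X κ φ i
            · rw [if_neg h5]; exact pr_mem X κ φ i _
      · rw [if_neg h2]
        by_cases h3 : (e, (4 : Fin 5)) ∈ M X κ φ i
        · rw [if_pos h3]
          by_cases h4 : k = 4 ∨ k = 2
          · rw [if_pos h4]; exact M_mem_verts X κ φ h3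
          · rw [if_neg h4]
            by_cases h5 : k = 3
            · rw [if_pos h5]; exact mid_mem_verts X κ φ h3 (by decide)
            · rw [if_neg h5]
              by_cases h6 : k = 1
              · rw [if_pos h6]; exact apex_mem X κ φ i
              · rw [if_neg h6]; exact pr_mem X κ φ i _
        · rw [if_neg h3]
          by_cases h4 : k = 0
          · rw [if_pos h4]; exact pr_mem X κ φ i _
          · rw [if_neg h4]
            by_cases h5 : k = 4
            · rw [if_pos h5]; exact pr_mem X κ φ i _
            · rw [if_neg h5]; exact apex_mem X κ φ i
  · simp only [rW]
    split_ifs with h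
    · subst h; exact dummy_mem X κ φ c k
    · exact apex_mem X κ φ i

lemma rW_fix (hφ : IsProperIncidenceColoring X φ) {i : Fin (κ + 1)} {x : WW X κ}
    (hx : x ∈ (Htree X κ φ i).verts) : rW X κ φ i x = x := by
  rcases verts_cases X κ φ hx with rfl | ⟨m, hm, rfl⟩ | ⟨m, q, hm, rfl, hadj⟩ | ⟨k, rfl⟩
  · simp [rW, apexW]
  · obtain ⟨e, k⟩ := m
    rcases M_snd X κ φ hm with rfl | rfl | rfl
    · have hl : i ≠ Fin.last κ := M_not_last X κ φ hm (Or.inl rfl)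
      simp [rW, hl, hm]
    · have hl : i = Fin.last κ := M_val2_last X κ φ hm rfl
      simp [rW, hl]
    · have hl : i ≠ Fin.last κ := M_not_last X κ φ hm (Or.inr rfl)
      have h0 : (e, (0 : Fin 5)) ∉ M X κ φ i := fun h => M_not_both X κ φ hφ h hm
      simp [rW, hl, h0, hm]
  · rcases q with u0 | ⟨e', k'⟩
    · simp only [rW]
      rw [if_pos ⟨m, hm, hadj⟩]
    · obtain ⟨e, k⟩ := m
      obtain ⟨rfl, hk⟩ := (csub_adj_inr_inr X).mp hadj
      rcases M_snd X κ φ hm with rfl | rfl | rfl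
      · have hk' : k' = 1 := by
          have := k'.isLt
          apply Fin.ext
          simp only [show ((0 : Fin 5) : ℕ) = 0 from rfl] at hk
          show k'.val = 1
          omega
        subst hk'
        have hl : i ≠ Fin.last κ := M_not_last X κ φ hm (Or.inl rfl)
        simp [rW, hl, hm]
      · have hl : i = Fin.last κ := M_val2_last X κ φ hm rfl
        have hk0 : k' ≠ 0 := by rintro rfl; revert hk; decide
        have hk4 : k' ≠ 4 := by rintro rfl; revert hk; decide
        simp [rW, hl, hk0, hk4]
      · have hk' : k' = 3 := by
          have := k'.isLt
          apply Fin.ext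
          simp only [show ((4 : Fin 5) : ℕ) = 4 from rfl] at hk
          show k'.val = 3
          omega
        subst hk'
        have hl : i ≠ Fin.last κ := M_not_last X κ φ hm (Or.inr rfl)
        have h0 : (e, (0 : Fin 5)) ∉ M X κ φ i := fun h => M_not_both X κ φ hφ h hm
        simp [rW, hl, h0, hm]
  · simp [rW]

lemma tree_adj_apex_M {i : Fin (κ + 1)} {m : ↥X.edgeSet × Fin 5} (hm : m ∈ M X κ φ i) :
    (Htree X κ φ i).Adj (apexW X κ i) (Sum.inl (Sum.inr m)) :=
  Or.inl (Or.inr (Or.inl ⟨m, hm, rfl, rfl⟩))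

lemma tree_adj_M_q {i : Fin (κ + 1)} {m : ↥X.edgeSet × Fin 5} {q : V ⊕ (↥X.edgeSet × Fin 5)}
    (hm : m ∈ M X κ φ i) (hadj : (csubdivision X 5).Adj (Sum.inr m) q) :
    (Htree X κ φ i).Adj (Sum.inl (Sum.inr m)) (Sum.inl q) :=
  Or.inl (Or.inl ⟨m, q, hm, rfl, rfl, hadj⟩)

def RGoal (i : Fin (κ + 1)) (a b : WW X κ) : Prop :=
  rW X κ φ i a = rW X κ φ i b ∨ (Htree X κ φ i).Adj (rW X κ φ i a) (rW X κ φ i b)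

lemma RGoal_symm {i : Fin (κ + 1)} {a b : WW X κ} (h : RGoal X κ φ i a b) :
    RGoal X κ φ i b a :=
  h.imp Eq.symm fun hh => (Htree X κ φ i).adj_symm hh

lemma RG_pr_apex (i : Fin (κ + 1)) (u : V) :
    pr X κ φ i u = apexW X κ i ∨ (Htree X κ φ i).Adj (pr X κ φ i u) (apexW X κ i) := by
  rcases pr_spec X κ φ i u with ⟨-, h⟩ | ⟨m, hm, -, h⟩
  · exact Or.inl h
  · rw [h]
    exact Or.inr ((Htree X κ φ i).adj_symm (tree_adj_apex_M X κ φ hm))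

lemma inL2_last {i : Fin (κ + 1)} {u : V} (hl : i = Fin.last κ) : ¬ inL2 X κ φ i u := by
  rintro ⟨⟨e, k⟩, hm, hadj⟩
  rcases (csub_adj_inl_inr X).mp hadj.symm with ⟨-, rfl⟩ | ⟨-, rfl⟩
  · exact M_not_last X κ φ hm (Or.inl rfl) hl
  · exact M_not_last X κ φ hm (Or.inr rfl) hl

lemma hhom_endpoint (hφ : IsProperIncidenceColoring X φ) {i : Fin (κ + 1)} {u : V}
    {e : X.edgeSet} {k : Fin 5} (h : (u = o1 X e ∧ k = 0) ∨ (u = o2 X e ∧ k = 4)) :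
    RGoal X κ φ i (Sum.inl (Sum.inl u)) (Sum.inl (Sum.inr (e, k))) := by
  have hadj : (csubdivision X 5).Adj (Sum.inl u) (Sum.inr (e, k)) :=
    (csub_adj_inl_inr X).mpr h
  by_cases hl : i = Fin.last κ
  · have h2 : rW X κ φ i (Sum.inl (Sum.inl u)) = apexW X κ i := by
      simp [rW, inL2_last X κ φ hl]
    have hk04 : k = 0 ∨ k = 4 := by
      rcases h with ⟨-, rfl⟩ | ⟨-, rfl⟩
      exacts [Or.inl rfl, Or.inr rfl]
    have h3 : rW X κ φ i (Sum.inl (Sum.inr (e, k))) = Sum.inl (Sum.inr (e, 2)) := by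
      simp [rW, hl, hk04]
    rw [RGoal, h2, h3]
    exact Or.inr (tree_adj_apex_M X κ φ ((M_two_iff X κ φ).mpr hl))
  · have main : ∀ m0, m0 ∈ M X κ φ i →
        (csubdivision X 5).Adj (Sum.inr m0) (Sum.inl u) →
        rW X κ φ i (Sum.inl (Sum.inl u)) = Sum.inl (Sum.inl u) := by
      intro m0 hm0 ha0
      simp only [rW]
      rw [if_pos ⟨m0, hm0, ha0⟩]
    rcases h with ⟨hu, rfl⟩ | ⟨hu, rfl⟩
    · by_cases h0 : (e, (0 : Fin 5)) ∈ M X κ φ i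
      · have h3 : rW X κ φ i (Sum.inl (Sum.inr (e, 0))) = Sum.inl (Sum.inr (e, 0)) := by
          simp [rW, hl, h0]
        rw [RGoal, main (e, 0) h0 hadj.symm, h3]
        exact Or.inr ((Htree X κ φ i).adj_symm (tree_adj_M_q X κ φ h0 hadj.symm))
      · have h3 : rW X κ φ i (Sum.inl (Sum.inr (e, 0))) = pr X κ φ i (o1 X e) := by
          by_cases h4 : (e, (4 : Fin 5)) ∈ M X κ φ i
          · simp [rW, hl, h0, h4]
          · simp [rW, hl, h0, h4]
        rw [RGoal, h3, ← hu]
        rcases pr_spec X κ φ i u with ⟨hn, hpr⟩ | ⟨m0, hm0, hadj0, hpr⟩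
        · have h2 : rW X κ φ i (Sum.inl (Sum.inl u)) = apexW X κ i := by
            simp [rW, hn]
          rw [h2, hpr]
          exact Or.inl rfl
        · rw [main m0 hm0 hadj0, hpr]
          exact Or.inr ((Htree X κ φ i).adj_symm (tree_adj_M_q X κ φ hm0 hadj0))
    · by_cases h4 : (e, (4 : Fin 5)) ∈ M X κ φ i
      · have h0 : (e, (0 : Fin 5)) ∉ M X κ φ i := fun hh => M_not_both X κ φ hφ hh h4
        have h3 : rW X κ φ i (Sum.inl (Sum.inr (e, 4))) = Sum.inl (Sum.inr (e, 4)) := by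
          simp [rW, hl, h0, h4]
        rw [RGoal, main (e, 4) h4 hadj.symm, h3]
        exact Or.inr ((Htree X κ φ i).adj_symm (tree_adj_M_q X κ φ h4 hadj.symm))
      · have h3 : rW X κ φ i (Sum.inl (Sum.inr (e, 4))) = pr X κ φ i (o2 X e) := by
          by_cases h0 : (e, (0 : Fin 5)) ∈ M X κ φ i
          · simp [rW, hl, h0, h4]
          · simp [rW, hl, h0, h4]
        rw [RGoal, h3, ← hu]
        rcases pr_spec X κ φ i u with ⟨hn, hpr⟩ | ⟨m0, hm0, hadj0, hpr⟩
        · have h2 : rW X κ φ i (Sum.inl (Sum.inl u)) = apexW X κ i := by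
            simp [rW, hn]
          rw [h2, hpr]
          exact Or.inl rfl
        · rw [main m0 hm0 hadj0, hpr]
          exact Or.inr ((Htree X κ φ i).adj_symm (tree_adj_M_q X κ φ hm0 hadj0))

lemma hhom_mid (hφ : IsProperIncidenceColoring X φ) {i : Fin (κ + 1)} (e : X.edgeSet)
    {k k' : Fin 5} (hkk : k.val + 1 = k'.val) :
    RGoal X κ φ i (Sum.inl (Sum.inr (e, k))) (Sum.inl (Sum.inr (e, k'))) := by
  have h0' := k.isLt
  have h1' := k'.isLt
  have hv : k.val = 0 ∨ k.val = 1 ∨ k.val = 2 ∨ k.val = 3 := by omega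
  have hcase : (k = 0 ∧ k' = 1) ∨ (k = 1 ∧ k' = 2) ∨ (k = 2 ∧ k' = 3) ∨ (k = 3 ∧ k' = 4) := by
    rcases hv with h | h | h | h
    · exact Or.inl ⟨Fin.ext h, Fin.ext (show k'.val = 1 by omega)⟩
    · exact Or.inr (Or.inl ⟨Fin.ext h, Fin.ext (show k'.val = 2 by omega)⟩)
    · exact Or.inr (Or.inr (Or.inl ⟨Fin.ext h, Fin.ext (show k'.val = 3 by omega)⟩))
    · exact Or.inr (Or.inr (Or.inr ⟨Fin.ext h, Fin.ext (show k'.val = 4 by omega)⟩))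
  have hM2 : i = Fin.last κ → (e, (2 : Fin 5)) ∈ M X κ φ i := fun hl => (M_two_iff X κ φ).mpr hl
  rcases hcase with ⟨rfl, rfl⟩ | ⟨rfl, rfl⟩ | ⟨rfl, rfl⟩ | ⟨rfl, rfl⟩
  · -- edge (0,1)
    by_cases hl : i = Fin.last κ
    · rw [RGoal, show rW X κ φ i (Sum.inl (Sum.inr (e, 0))) = Sum.inl (Sum.inr (e, 2)) from
        by simp [rW, hl], show rW X κ φ i (Sum.inl (Sum.inr (e, 1))) = Sum.inl (Sum.inr (e, 1))
        from by simp [rW, hl]]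
      exact Or.inr (tree_adj_M_q X κ φ (hM2 hl) (csub_adj_mid X e (by decide)))
    · by_cases h0 : (e, (0 : Fin 5)) ∈ M X κ φ i
      · rw [RGoal, show rW X κ φ i (Sum.inl (Sum.inr (e, 0))) = Sum.inl (Sum.inr (e, 0)) from
          by simp [rW, hl, h0], show rW X κ φ i (Sum.inl (Sum.inr (e, 1))) =
          Sum.inl (Sum.inr (e, 1)) from by simp [rW, hl, h0]]
        exact Or.inr (tree_adj_M_q X κ φ h0 (csub_adj_mid X e (by decide)))
      · have ha : rW X κ φ i (Sum.inl (Sum.inr (e, 0))) = pr X κ φ i (o1 X e) := by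
          by_cases h4 : (e, (4 : Fin 5)) ∈ M X κ φ i
          · simp [rW, hl, h0, h4]
          · simp [rW, hl, h0, h4]
        have hb : rW X κ φ i (Sum.inl (Sum.inr (e, 1))) = apexW X κ i := by
          by_cases h4 : (e, (4 : Fin 5)) ∈ M X κ φ i
          · simp [rW, hl, h0, h4]
          · simp [rW, hl, h0, h4]
        rw [RGoal, ha, hb]
        exact RG_pr_apex X κ φ i (o1 X e)
  · -- edge (1,2)
    by_cases hl : i = Fin.last κ
    · rw [RGoal, show rW X κ φ i (Sum.inl (Sum.inr (e, 1))) = Sum.inl (Sum.inr (e, 1)) from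
        by simp [rW, hl], show rW X κ φ i (Sum.inl (Sum.inr (e, 2))) = Sum.inl (Sum.inr (e, 2))
        from by simp [rW, hl]]
      exact Or.inr ((Htree X κ φ i).adj_symm
        (tree_adj_M_q X κ φ (hM2 hl) (csub_adj_mid X e (by decide))))
    · by_cases h0 : (e, (0 : Fin 5)) ∈ M X κ φ i
      · rw [RGoal, show rW X κ φ i (Sum.inl (Sum.inr (e, 1))) = Sum.inl (Sum.inr (e, 1)) from
          by simp [rW, hl, h0], show rW X κ φ i (Sum.inl (Sum.inr (e, 2))) =
          Sum.inl (Sum.inr (e, 0)) from by simp [rW, hl, h0]]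
        exact Or.inr ((Htree X κ φ i).adj_symm
          (tree_adj_M_q X κ φ h0 (csub_adj_mid X e (by decide))))
      · by_cases h4 : (e, (4 : Fin 5)) ∈ M X κ φ i
        · rw [RGoal, show rW X κ φ i (Sum.inl (Sum.inr (e, 1))) = apexW X κ i from
            by simp [rW, hl, h0, h4], show rW X κ φ i (Sum.inl (Sum.inr (e, 2))) =
            Sum.inl (Sum.inr (e, 4)) from by simp [rW, hl, h0, h4]]
          exact Or.inr (tree_adj_apex_M X κ φ h4)
        · rw [RGoal, show rW X κ φ i (Sum.inl (Sum.inr (e, 1))) = apexW X κ i from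
            by simp [rW, hl, h0, h4], show rW X κ φ i (Sum.inl (Sum.inr (e, 2))) =
            apexW X κ i from by simp [rW, hl, h0, h4]]
          exact Or.inl rfl
  · -- edge (2,3)
    by_cases hl : i = Fin.last κ
    · rw [RGoal, show rW X κ φ i (Sum.inl (Sum.inr (e, 2))) = Sum.inl (Sum.inr (e, 2)) from
        by simp [rW, hl], show rW X κ φ i (Sum.inl (Sum.inr (e, 3))) = Sum.inl (Sum.inr (e, 3))
        from by simp [rW, hl]]
      exact Or.inr (tree_adj_M_q X κ φ (hM2 hl) (csub_adj_mid X e (by decide)))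
    · by_cases h0 : (e, (0 : Fin 5)) ∈ M X κ φ i
      · rw [RGoal, show rW X κ φ i (Sum.inl (Sum.inr (e, 2))) = Sum.inl (Sum.inr (e, 0)) from
          by simp [rW, hl, h0], show rW X κ φ i (Sum.inl (Sum.inr (e, 3))) = apexW X κ i from
          by simp [rW, hl, h0]]
        exact Or.inr ((Htree X κ φ i).adj_symm (tree_adj_apex_M X κ φ h0))
      · by_cases h4 : (e, (4 : Fin 5)) ∈ M X κ φ i
        · rw [RGoal, show rW X κ φ i (Sum.inl (Sum.inr (e, 2))) = Sum.inl (Sum.inr (e, 4)) from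
            by simp [rW, hl, h0, h4], show rW X κ φ i (Sum.inl (Sum.inr (e, 3))) =
            Sum.inl (Sum.inr (e, 3)) from by simp [rW, hl, h0, h4]]
          exact Or.inr (tree_adj_M_q X κ φ h4 (csub_adj_mid X e (by decide)))
        · rw [RGoal, show rW X κ φ i (Sum.inl (Sum.inr (e, 2))) = apexW X κ i from
            by simp [rW, hl, h0, h4], show rW X κ φ i (Sum.inl (Sum.inr (e, 3))) =
            apexW X κ i from by simp [rW, hl, h0, h4]]
          exact Or.inl rfl
  · -- edge (3,4)
    by_cases hl : i = Fin.last κ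
    · rw [RGoal, show rW X κ φ i (Sum.inl (Sum.inr (e, 3))) = Sum.inl (Sum.inr (e, 3)) from
        by simp [rW, hl], show rW X κ φ i (Sum.inl (Sum.inr (e, 4))) = Sum.inl (Sum.inr (e, 2))
        from by simp [rW, hl]]
      exact Or.inr ((Htree X κ φ i).adj_symm
        (tree_adj_M_q X κ φ (hM2 hl) (csub_adj_mid X e (by decide))))
    · by_cases h0 : (e, (0 : Fin 5)) ∈ M X κ φ i
      · rw [RGoal, show rW X κ φ i (Sum.inl (Sum.inr (e, 3))) = apexW X κ i from
          by simp [rW, hl, h0], show rW X κ φ i (Sum.inl (Sum.inr (e, 4))) =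
          pr X κ φ i (o2 X e) from by simp [rW, hl, h0]]
        exact (RG_pr_apex X κ φ i (o2 X e)).imp Eq.symm fun h => (Htree X κ φ i).adj_symm h
      · by_cases h4 : (e, (4 : Fin 5)) ∈ M X κ φ i
        · rw [RGoal, show rW X κ φ i (Sum.inl (Sum.inr (e, 3))) = Sum.inl (Sum.inr (e, 3)) from
            by simp [rW, hl, h0, h4], show rW X κ φ i (Sum.inl (Sum.inr (e, 4))) =
            Sum.inl (Sum.inr (e, 4)) from by simp [rW, hl, h0, h4]]
          exact Or.inr ((Htree X κ φ i).adj_symm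
            (tree_adj_M_q X κ φ h4 (csub_adj_mid X e (by decide))))
        · rw [RGoal, show rW X κ φ i (Sum.inl (Sum.inr (e, 3))) = apexW X κ i from
            by simp [rW, hl, h0, h4], show rW X κ φ i (Sum.inl (Sum.inr (e, 4))) =
            pr X κ φ i (o2 X e) from by simp [rW, hl, h0, h4]]
          exact (RG_pr_apex X κ φ i (o2 X e)).imp Eq.symm fun h => (Htree X κ φ i).adj_symm h

lemma hhom_apex (hφ : IsProperIncidenceColoring X φ) {i c : Fin (κ + 1)} {e : X.edgeSet}
    {k : Fin 5} (hm : (e, k) ∈ M X κ φ c) :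
    RGoal X κ φ i (Sum.inl (Sum.inr (e, k))) (Sum.inr (c, 0)) := by
  have hb : rW X κ φ i (Sum.inr (c, 0)) = apexW X κ i := by
    by_cases hc : c = i
    · subst hc; simp [rW, apexW]
    · simp [rW, hc]
  have key : rW X κ φ i (Sum.inl (Sum.inr (e, k))) = apexW X κ i ∨
      ∃ m0, m0 ∈ M X κ φ i ∧ rW X κ φ i (Sum.inl (Sum.inr (e, k))) = Sum.inl (Sum.inr m0) := by
    have viaPr : ∀ u : V, rW X κ φ i (Sum.inl (Sum.inr (e, k))) = pr X κ φ i u →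
        rW X κ φ i (Sum.inl (Sum.inr (e, k))) = apexW X κ i ∨
        ∃ m0, m0 ∈ M X κ φ i ∧
          rW X κ φ i (Sum.inl (Sum.inr (e, k))) = Sum.inl (Sum.inr m0) := by
      intro u hu
      rcases pr_spec X κ φ i u with ⟨-, hp⟩ | ⟨m0, hm0, -, hp⟩
      · exact Or.inl (hu.trans hp)
      · exact Or.inr ⟨m0, hm0, hu.trans hp⟩
    rcases M_snd X κ φ hm with rfl | rfl | rfl
    · by_cases hl : i = Fin.last κ
      · exact Or.inr ⟨(e, 2), (M_two_iff X κ φ).mpr hl, by simp [rW, hl]⟩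
      · by_cases h0 : (e, (0 : Fin 5)) ∈ M X κ φ i
        · exact Or.inr ⟨(e, 0), h0, by simp [rW, hl, h0]⟩
        · refine viaPr (o1 X e) ?_
          by_cases h4 : (e, (4 : Fin 5)) ∈ M X κ φ i
          · simp [rW, hl, h0, h4]
          · simp [rW, hl, h0, h4]
    · by_cases hl : i = Fin.last κ
      · exact Or.inr ⟨(e, 2), (M_two_iff X κ φ).mpr hl, by simp [rW, hl]⟩
      · by_cases h0 : (e, (0 : Fin 5)) ∈ M X κ φ i
        · exact Or.inr ⟨(e, 0), h0, by simp [rW, hl, h0]⟩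
        · by_cases h4 : (e, (4 : Fin 5)) ∈ M X κ φ i
          · exact Or.inr ⟨(e, 4), h4, by simp [rW, hl, h0, h4]⟩
          · exact Or.inl (by simp [rW, hl, h0, h4])
    · by_cases hl : i = Fin.last κ
      · exact Or.inr ⟨(e, 2), (M_two_iff X κ φ).mpr hl, by simp [rW, hl]⟩
      · by_cases h4 : (e, (4 : Fin 5)) ∈ M X κ φ i
        · have h0 : (e, (0 : Fin 5)) ∉ M X κ φ i := fun hh => M_not_both X κ φ hφ hh h4
          exact Or.inr ⟨(e, 4), h4, by simp [rW, hl, h0, h4]⟩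
        · refine viaPr (o2 X e) ?_
          by_cases h0 : (e, (0 : Fin 5)) ∈ M X κ φ i
          · simp [rW, hl, h0, h4]
          · simp [rW, hl, h0, h4]
  rw [RGoal, hb]
  rcases key with h | ⟨m0, hm0, h⟩
  · exact Or.inl h
  · rw [h]
    exact Or.inr ((Htree X κ φ i).adj_symm (tree_adj_apex_M X κ φ hm0))

lemma GG_hhom (hφ : IsProperIncidenceColoring X φ) (i : Fin (κ + 1)) :
    ∀ a b, (GG X κ φ).Adj a b →
      rW X κ φ i a = rW X κ φ i b ∨ (Htree X κ φ i).Adj (rW X κ φ i a) (rW X κ φ i b) := by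
  have master : ∀ a b, Rbig X κ φ a b → RGoal X κ φ i a b := by
    rintro a b (⟨p, q, rfl, rfl, hpq⟩ | ⟨m, c, rfl, rfl, hm⟩ | ⟨c, k, l, rfl, rfl, hd⟩)
    · rcases p with u | ⟨ep, kp⟩ <;> rcases q with u' | ⟨eq', kq⟩
      · exact absurd hpq (csub_not_adj_inl_inl X)
      · exact hhom_endpoint X κ φ hφ ((csub_adj_inl_inr X).mp hpq)
      · exact RGoal_symm X κ φ (hhom_endpoint X κ φ hφ ((csub_adj_inl_inr X).mp hpq.symm))
      · obtain ⟨rfl, hk⟩ := (csub_adj_inr_inr X).mp hpq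
        rcases hk with hk | hk
        · exact hhom_mid X κ φ hφ ep hk
        · exact RGoal_symm X κ φ (hhom_mid X κ φ hφ ep hk)
    · obtain ⟨e, k⟩ := m
      exact hhom_apex X κ φ hφ hm
    · by_cases hc : c = i
      · subst hc
        have hva : rW X κ φ c (Sum.inr (c, k)) = Sum.inr (c, k) := by simp [rW]
        have hvb : rW X κ φ c (Sum.inr (c, l)) = Sum.inr (c, l) := by simp [rW]
        rw [RGoal, hva, hvb]
        exact Or.inr (Or.inl (Or.inr (Or.inr ⟨k, l, rfl, rfl, hd⟩)))
      · have hva : rW X κ φ i (Sum.inr (c, k)) = apexW X κ i := by simp [rW, hc]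
        have hvb : rW X κ φ i (Sum.inr (c, l)) = apexW X κ i := by simp [rW, hc]
        rw [RGoal, hva, hvb]
        exact Or.inl rfl
  intro a b hab
  rw [GG, SimpleGraph.fromRel_adj] at hab
  rcases hab with ⟨-, h | h⟩
  · exact master a b h
  · exact RGoal_symm X κ φ (master b a h)

def chiW (i : Fin (κ + 1)) : WW X κ → ℤ
  | Sum.inr (c, k) =>
      if c = i ∧ k = 2 then 3
      else if c = i ∧ k = 1 then 2
      else if c = i ∧ k = 3 then 0
      else if c = i ∧ k = 4 then -1
      else 1
  | Sum.inl _ => 1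

lemma chiW_inl (i : Fin (κ + 1)) (p : V ⊕ (↥X.edgeSet × Fin 5)) :
    chiW X κ i (Sum.inl p) = 1 := rfl

lemma chiW_apex (i : Fin (κ + 1)) : chiW X κ i (apexW X κ i) = 1 := by
  simp [chiW, apexW]

lemma chiW_lip {i : Fin (κ + 1)} {x y : WW X κ} (h : (Htree X κ φ i).Adj x y) :
    |chiW X κ i x - chiW X κ i y| ≤ 1 := by
  have key : ∀ a b, HRel X κ φ i a b → |chiW X κ i a - chiW X κ i b| ≤ 1 := by
    rintro a b (⟨m, q, hm, rfl, rfl, -⟩ | ⟨m, hm, rfl, rfl⟩ | ⟨k, l, rfl, rfl, hd⟩)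
    · rw [chiW_inl, chiW_inl]; norm_num
    · rw [chiW_apex, chiW_inl]; norm_num
    · rcases hd with ⟨rfl, rfl⟩ | ⟨rfl, rfl⟩ | ⟨rfl, rfl⟩ | ⟨rfl, rfl⟩ <;>
        simp [chiW] <;> decide
  rcases h with h | h
  · exact key _ _ h
  · rw [abs_sub_comm]
    exact key _ _ h

lemma Htree_connected (i : Fin (κ + 1)) : (Htree X κ φ i).coe.Connected := by
  apply connected_of_level _ (⟨apexW X κ i, apex_mem X κ φ i⟩ : (Htree X κ φ i).verts)
    (fun v => depW X κ φ i v.val)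
  rintro ⟨v, hv⟩ hne
  have hvne : v ≠ apexW X κ i := fun h => hne (Subtype.ext h)
  have hdep0 := depW_apex X κ φ i
  rcases hv with h | ⟨y, h | h⟩
  · exact absurd h hvne
  · rcases HRel_src X κ φ h with h' | h'
    · exact absurd h' hvne
    · refine ⟨⟨apexW X κ i, apex_mem X κ φ i⟩, Or.inl h', ?_⟩
      have := HRel_dep X κ φ h'
      simp only at this ⊢
      omega
  · refine ⟨⟨y, Or.inr ⟨v, Or.inl h⟩⟩, Or.inl h, ?_⟩
    have := HRel_dep X κ φ h
    simp only at this ⊢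
    omega

lemma Htree_acyclic (hφ : IsProperIncidenceColoring X φ) (i : Fin (κ + 1)) :
    (Htree X κ φ i).coe.IsAcyclic := by
  apply acyclic_of_level _ (fun v => depW X κ φ i v.val)
  · rintro u v (h | h)
    · exact Or.inl (HRel_dep X κ φ h)
    · exact Or.inr (HRel_dep X κ φ h)
  · rintro u w v hu hw hdu hdw
    have hu' : HRel X κ φ i u.val v.val := by
      rcases hu with h | h
      · exact h
      · exfalso; have := HRel_dep X κ φ h; omega
    have hw' : HRel X κ φ i w.val v.val := by
      rcases hw with h | h
      · exact h
      · exfalso; have := HRel_dep X κ φ h; omega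
    exact Subtype.ext (HRel_parent_unique X κ φ hφ hu' hw')

lemma Htree_isometric (hφ : IsProperIncidenceColoring X φ) (i : Fin (κ + 1)) :
    (Htree X κ φ i).IsIsometric :=
  isometric_of_retract _ (Htree_connected X κ φ i) (rW X κ φ i) (rW_mem X κ φ i)
    (fun _ ha => rW_fix X κ φ hφ ha) (GG_hhom X κ φ hφ i)

lemma Htree_dist_le (i : Fin (κ + 1)) (v : (Htree X κ φ i).verts) :
    (Htree X κ φ i).coe.dist ⟨apexW X κ i, apex_mem X κ φ i⟩ v ≤ 2 := by
  obtain ⟨x, hx⟩ := v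
  have hcase : x = apexW X κ i ∨ HRel X κ φ i (apexW X κ i) x ∨
      ∃ y, HRel X κ φ i (apexW X κ i) y ∧ HRel X κ φ i y x := by
    rcases hx with h | ⟨y, h | h⟩
    · exact Or.inl h
    · rcases HRel_src X κ φ h with h' | h'
      · exact Or.inl h'
      · exact Or.inr (Or.inl h')
    · rcases HRel_src X κ φ h with h' | h'
      · subst h'; exact Or.inr (Or.inl h)
      · exact Or.inr (Or.inr ⟨y, h', h⟩)
  rcases hcase with h | h | ⟨y, h1, h2⟩
  · have heq : (⟨x, hx⟩ : (Htree X κ φ i).verts) = ⟨apexW X κ i, apex_mem X κ φ i⟩ :=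
      Subtype.ext h
    rw [heq, SimpleGraph.dist_self]
    omega
  · have hadj : (Htree X κ φ i).coe.Adj ⟨apexW X κ i, apex_mem X κ φ i⟩ ⟨x, hx⟩ := Or.inl h
    have := SimpleGraph.dist_eq_one_iff_adj.mpr hadj
    omega
  · have hymem : y ∈ (Htree X κ φ i).verts := Or.inr ⟨x, Or.inl h2⟩
    have hadj1 : (Htree X κ φ i).coe.Adj ⟨apexW X κ i, apex_mem X κ φ i⟩ ⟨y, hymem⟩ :=
      Or.inl h1
    have hadj2 : (Htree X κ φ i).coe.Adj ⟨y, hymem⟩ ⟨x, hx⟩ := Or.inl h2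
    have htr := (Htree_connected X κ φ i).dist_triangle
      (u := ⟨apexW X κ i, apex_mem X κ φ i⟩) (v := ⟨y, hymem⟩) (w := ⟨x, hx⟩)
    have e1 := SimpleGraph.dist_eq_one_iff_adj.mpr hadj1
    have e2 := SimpleGraph.dist_eq_one_iff_adj.mpr hadj2
    omega

lemma Htree_radius (i : Fin (κ + 1)) : graphRadius (Htree X κ φ i).coe = 2 := by
  have hconn := Htree_connected X κ φ i
  set d2 : (Htree X κ φ i).verts := ⟨Sum.inr (i, 2), dummy_mem X κ φ i 2⟩ with hd2
  set d4 : (Htree X κ φ i).verts := ⟨Sum.inr (i, 4), dummy_mem X κ φ i 4⟩ with hd4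
  have hlip : ∀ u v : (Htree X κ φ i).verts, (Htree X κ φ i).coe.Adj u v →
      |chiW X κ i u.val - chiW X κ i v.val| ≤ 1 := fun u v h => chiW_lip X κ φ h
  have habs := abs_le_dist hconn (fun v => chiW X κ i v.val) hlip d2 d4
  have hv2 : chiW X κ i d2.val = 3 := by simp [hd2, chiW]
  have hv4 : chiW X κ i d4.val = -1 := by simp [hd4, chiW]
  rw [hv2, hv4] at habs
  have hdist : 4 ≤ (Htree X κ φ i).coe.dist d2 d4 := by
    have : (4 : ℤ) ≤ ((Htree X κ φ i).coe.dist d2 d4 : ℤ) := by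
      calc (4 : ℤ) = |3 - (-1)| := by decide
        _ ≤ _ := habs
    exact_mod_cast this
  have hub : ∀ v, (Htree X κ φ i).coe.dist ⟨apexW X κ i, apex_mem X κ φ i⟩ v ≤ 2 :=
    Htree_dist_le X κ φ i
  rw [graphRadius]
  apply le_antisymm
  · exact Nat.sInf_le ⟨⟨apexW X κ i, apex_mem X κ φ i⟩, hub⟩
  · refine le_csInf ⟨2, ⟨apexW X κ i, apex_mem X κ φ i⟩, hub⟩ ?_
    rintro n ⟨u, hu⟩
    have h1 := hu d2
    have h2 := hu d4
    have htr := hconn.dist_triangle (u := d2) (v := u) (w := d4)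
    have hcomm : (Htree X κ φ i).coe.dist d2 u = (Htree X κ φ i).coe.dist u d2 :=
      SimpleGraph.dist_comm
    omega

lemma cover_mid (e : X.edgeSet) {k k' : Fin 5} (hkk : k.val + 1 = k'.val) :
    ∃ i, (Htree X κ φ i).Adj (Sum.inl (Sum.inr (e, k))) (Sum.inl (Sum.inr (e, k'))) := by
  have h0' := k.isLt
  have h1' := k'.isLt
  have hv : k.val = 0 ∨ k.val = 1 ∨ k.val = 2 ∨ k.val = 3 := by omega
  have hcase : (k = 0 ∧ k' = 1) ∨ (k = 1 ∧ k' = 2) ∨ (k = 2 ∧ k' = 3) ∨ (k = 3 ∧ k' = 4) := by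
    rcases hv with h | h | h | h
    · exact Or.inl ⟨Fin.ext h, Fin.ext (show k'.val = 1 by omega)⟩
    · exact Or.inr (Or.inl ⟨Fin.ext h, Fin.ext (show k'.val = 2 by omega)⟩)
    · exact Or.inr (Or.inr (Or.inl ⟨Fin.ext h, Fin.ext (show k'.val = 3 by omega)⟩))
    · exact Or.inr (Or.inr (Or.inr ⟨Fin.ext h, Fin.ext (show k'.val = 4 by omega)⟩))
  rcases hcase with ⟨rfl, rfl⟩ | ⟨rfl, rfl⟩ | ⟨rfl, rfl⟩ | ⟨rfl, rfl⟩
  · exact ⟨(φ (o1 X e) (e : Sym2 V)).castSucc, Or.inl (Or.inl ⟨(e, 0), Sum.inr (e, 1),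
      (M_zero_iff X κ φ).mpr rfl, rfl, rfl, csub_adj_mid X e (by decide)⟩)⟩
  · exact ⟨Fin.last κ, Or.inr (Or.inl ⟨(e, 2), Sum.inr (e, 1),
      (M_two_iff X κ φ).mpr rfl, rfl, rfl, csub_adj_mid X e (by decide)⟩)⟩
  · exact ⟨Fin.last κ, Or.inl (Or.inl ⟨(e, 2), Sum.inr (e, 3),
      (M_two_iff X κ φ).mpr rfl, rfl, rfl, csub_adj_mid X e (by decide)⟩)⟩
  · exact ⟨(φ (o2 X e) (e : Sym2 V)).castSucc, Or.inr (Or.inl ⟨(e, 4), Sum.inr (e, 3),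
      (M_four_iff X κ φ).mpr rfl, rfl, rfl, csub_adj_mid X e (by decide)⟩)⟩

lemma Htree_cover : EdgeCover (fun i => Htree X κ φ i) := by
  have master : ∀ u v, Rbig X κ φ u v → ∃ i, (Htree X κ φ i).Adj u v := by
    rintro u v (⟨p, q, rfl, rfl, hpq⟩ | ⟨m, c, rfl, rfl, hm⟩ | ⟨c, k, l, rfl, rfl, hd⟩)
    · rcases p with u0 | ⟨e, k⟩ <;> rcases q with u1 | ⟨e', k'⟩
      · exact absurd hpq (csub_not_adj_inl_inl X)
      · rcases (csub_adj_inl_inr X).mp hpq with ⟨hu, rfl⟩ | ⟨hu, rfl⟩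
        · exact ⟨(φ (o1 X e') (e' : Sym2 V)).castSucc, Or.inr (Or.inl ⟨(e', 0), Sum.inl u0,
            (M_zero_iff X κ φ).mpr rfl, rfl, rfl, hpq.symm⟩)⟩
        · exact ⟨(φ (o2 X e') (e' : Sym2 V)).castSucc, Or.inr (Or.inl ⟨(e', 4), Sum.inl u0,
            (M_four_iff X κ φ).mpr rfl, rfl, rfl, hpq.symm⟩)⟩
      · rcases (csub_adj_inl_inr X).mp hpq.symm with ⟨hu, rfl⟩ | ⟨hu, rfl⟩
        · exact ⟨(φ (o1 X e) (e : Sym2 V)).castSucc, Or.inl (Or.inl ⟨(e, 0), Sum.inl u1,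
            (M_zero_iff X κ φ).mpr rfl, rfl, rfl, hpq⟩)⟩
        · exact ⟨(φ (o2 X e) (e : Sym2 V)).castSucc, Or.inl (Or.inl ⟨(e, 4), Sum.inl u1,
            (M_four_iff X κ φ).mpr rfl, rfl, rfl, hpq⟩)⟩
      · obtain ⟨rfl, hk⟩ := (csub_adj_inr_inr X).mp hpq
        rcases hk with hk | hk
        · exact cover_mid X κ φ e hk
        · obtain ⟨i, hi⟩ := cover_mid X κ φ e hk
          exact ⟨i, (Htree X κ φ i).adj_symm hi⟩
    · exact ⟨c, Or.inr (Or.inr (Or.inl ⟨m, hm, rfl, rfl⟩))⟩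
    · exact ⟨c, Or.inl (Or.inr (Or.inr ⟨k, l, rfl, rfl, hd⟩))⟩
  intro u v huv
  rw [GG, SimpleGraph.fromRel_adj] at huv
  rcases huv with ⟨-, h | h⟩
  · exact master u v h
  · obtain ⟨i, hi⟩ := master v u h
    exact ⟨i, (Htree X κ φ i).adj_symm hi⟩

lemma GG_iso :
    Nonempty (((GG X κ φ).induce
      (Set.range (Sum.inl : (V ⊕ (↥X.edgeSet × Fin 5)) → WW X κ))) ≃g csubdivision X 5) := by
  refine ⟨SimpleGraph.Iso.symm ⟨Equiv.ofInjective _ Sum.inl_injective, fun {a b} => ?_⟩⟩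
  simp only [SimpleGraph.comap_adj, Function.Embedding.coe_subtype, Equiv.ofInjective_apply]
  exact GG_adj_inl_inl X κ φ


end Construction
end Stmt15Aux

theorem stmt15 {V : Type} (X : SimpleGraph V) (hX : X.Connected) (κ : ℕ)
    (φ : V → Sym2 V → Fin κ) (hφ : IsProperIncidenceColoring X φ) :
    ∃ (W : Type) (G : SimpleGraph W) (S : Set W),
      Nonempty ((G.induce S) ≃g csubdivision X 5) ∧
      ∃ H : Fin (κ + 1) → G.Subgraph,
        EdgeCover H ∧
        ∀ i, (H i).IsIsometric ∧ (H i).coe.IsTree ∧ graphRadius (H i).coe = 2 := by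
  refine ⟨Stmt15Aux.WW X κ, Stmt15Aux.GG X κ φ,
    Set.range (Sum.inl : (V ⊕ (↥X.edgeSet × Fin 5)) → Stmt15Aux.WW X κ),
    Stmt15Aux.GG_iso X κ φ,
    (fun i => Stmt15Aux.Htree X κ φ i), Stmt15Aux.Htree_cover X κ φ,
    fun i => ⟨Stmt15Aux.Htree_isometric X κ φ hφ i,
      ⟨Stmt15Aux.Htree_connected X κ φ i, Stmt15Aux.Htree_acyclic X κ φ hφ i⟩,
      Stmt15Aux.Htree_radius X κ φ i⟩⟩
end

section
/- For every positive integer n there exists a graph Gₙ with treewidth at least n that can be edge covered by two isometric subgraphs H₁ and H₂ with H₁ ∈ Apex(P₃) and H₂ ∈ Apex(S₃^⋆); in particular td(H₁) ≤ 3 and td(H₂) ≤ 4. -/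
open SimpleGraph
open scoped Classical

section WalkLemmas
variable {W : Type} {Γ : SimpleGraph W}

lemma aux_walk_const {α : Type} {σ : W → α} {r : ℕ} {rk : W → ℕ}
    (hσ : ∀ x y, Γ.Adj x y → rk x ≤ r → rk y ≤ r → σ x = σ y) :
    ∀ {u v : W} (p : Γ.Walk u v), (∀ x ∈ p.support, rk x ≤ r) → σ u = σ v := by
  intro u v p
  induction p with
  | nil => intro _; rfl
  | @cons u w v h p ih =>
    intro hs
    have h1 : σ u = σ w := hσ _ _ h (hs _ (by simp)) (hs _ (by simp))
    exact h1.trans (ih fun x hx => hs x (by simp [hx]))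

lemma aux_reach_const {α : Type} {σ : W → α} (hσ : ∀ x y, Γ.Adj x y → σ x = σ y)
    {u v : W} (h : Γ.Reachable u v) : σ u = σ v := by
  obtain ⟨p⟩ := h
  exact aux_walk_const (σ := σ) (r := 0) (rk := fun _ => 0)
    (fun x y hxy _ _ => hσ x y hxy) p (fun x _ => le_rfl)

lemma aux_reach_of_support {S : Set W} :
    ∀ {u v : W} (p : Γ.Walk u v), (∀ x ∈ p.support, x ∈ S) →
      ∀ (hu : u ∈ S) (hv : v ∈ S), (Γ.induce S).Reachable ⟨u, hu⟩ ⟨v, hv⟩ := by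
  intro u v p
  induction p with
  | nil => intro _ hu hv; rfl
  | @cons u w v h p ih =>
    intro hs hu hv
    have hw : w ∈ S := hs _ (by simp)
    have hadj : (Γ.induce S).Adj ⟨u, hu⟩ ⟨w, hw⟩ := by
      simp only [comap_adj, Function.Embedding.coe_subtype]
      exact h
    exact hadj.reachable.trans (ih (fun x hx => hs x (by simp [hx])) hw hv)

lemma aux_mono_reach {S S' : Set W} (hss : S ⊆ S') {u v : ↥S}
    (h : (Γ.induce S).Reachable u v) :
    (Γ.induce S').Reachable ⟨u.1, hss u.2⟩ ⟨v.1, hss v.2⟩ :=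
  h.map (Γ.induceHomOfLE hss).toHom

lemma aux_dist_two {x y z : W} (hne : x ≠ y) (hnadj : ¬ Γ.Adj x y)
    (h1 : Γ.Adj x z) (h2 : Γ.Adj z y) : Γ.dist x y = 2 := by
  have hr : Γ.Reachable x y := ⟨Walk.cons h1 (Walk.cons h2 Walk.nil)⟩
  have hle : Γ.dist x y ≤ 2 := by
    have := SimpleGraph.dist_le (Walk.cons h1 (Walk.cons h2 Walk.nil))
    simpa using this
  have h0 : Γ.dist x y ≠ 0 := by
    intro h0
    rcases dist_eq_zero_iff_eq_or_not_reachable.mp h0 with h | h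
    · exact hne h
    · exact h hr
  have h1' : Γ.dist x y ≠ 1 := fun h => hnadj (dist_eq_one_iff_adj.mp h)
  omega

end WalkLemmas

lemma aux_connected_of_root {V : Type} {G : SimpleGraph V} {S : Set V} {r : V} (hr : r ∈ S)
    (f : V → ℕ)
    (h : ∀ x, x ∈ S → x ≠ r → ∃ y, y ∈ S ∧ G.Adj x y ∧ f y < f x) :
    (G.induce S).Connected := by
  have key : ∀ n (x : V) (hx : x ∈ S), f x ≤ n → (G.induce S).Reachable ⟨x, hx⟩ ⟨r, hr⟩ := by
    intro n
    induction n with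
    | zero =>
      intro x hx hfx
      by_cases hxr : x = r
      · subst hxr; rfl
      · obtain ⟨y, hyS, hadj, hlt⟩ := h x hx hxr
        omega
    | succ n ih =>
      intro x hx hfx
      by_cases hxr : x = r
      · subst hxr; rfl
      · obtain ⟨y, hyS, hadj, hlt⟩ := h x hx hxr
        have hadj' : (G.induce S).Adj ⟨x, hx⟩ ⟨y, hyS⟩ := by
          simp only [comap_adj, Function.Embedding.coe_subtype]
          exact hadj
        exact hadj'.reachable.trans (ih y hyS (by omega))
  haveI : Nonempty ↥S := ⟨⟨r, hr⟩⟩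
  refine ⟨fun a b => ?_⟩
  exact (key (f a.1) a.1 a.2 le_rfl).trans (key (f b.1) b.1 b.2 le_rfl).symm

lemma aux_rank_induce {V : Type} {G : SimpleGraph V} {f : V → ℕ}
    (hrank : ∀ u v, u ≠ v → f u = f v → ∀ p : G.Walk u v, ∃ w ∈ p.support, f u < f w)
    (S : Set V) :
    ∀ (u v : ↥S), u ≠ v → f u.1 = f v.1 →
      ∀ p : (G.induce S).Walk u v, ∃ w ∈ p.support, f u.1 < f w.1 := by
  intro u v huv hfe p
  obtain ⟨w, hwsupp, hw⟩ := hrank u.1 v.1 (by simpa [Subtype.ext_iff] using huv) hfe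
    (p.map (SimpleGraph.Embedding.induce S).toHom)
  replace hwsupp : w ∈ (p.map (SimpleGraph.Embedding.induce S).toHom).support := hwsupp
  rw [Walk.support_map] at hwsupp
  obtain ⟨w', hw', hww⟩ := List.mem_map.mp hwsupp
  subst hww
  exact ⟨w', hw', hw⟩

lemma aux_treedepth_le : ∀ (N : ℕ) (V : Type) [Fintype V], Fintype.card V ≤ N →
    ∀ (G : SimpleGraph V) (k : ℕ) (f : V → ℕ), (∀ v, f v < k) →
    (∀ (u v : V), u ≠ v → f u = f v → ∀ p : G.Walk u v, ∃ w ∈ p.support, f u < f w) →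
    treedepth G ≤ k := by
  intro N
  induction N with
  | zero =>
    intro V _ hcard G k f hfk hrank
    haveI : IsEmpty V := by
      rw [← Fintype.card_eq_zero_iff]; omega
    rw [treedepth]
    simp [this]
  | succ N ih =>
    intro V _ hcard G k f hfk hrank
    by_cases hV : IsEmpty V
    · rw [treedepth]; simp [hV]
    · haveI hne : Nonempty V := not_isEmpty_iff.mp hV
      by_cases hc : G.Connected
      · obtain ⟨v0, hv0⟩ : ∃ v0 : V, ∀ v, f v ≤ f v0 := by
          obtain ⟨v0, _, hv0⟩ := Finset.exists_max_image Finset.univ f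
            ⟨Classical.arbitrary V, Finset.mem_univ _⟩
          exact ⟨v0, fun v => hv0 v (Finset.mem_univ v)⟩
        have hk : 1 ≤ k := by have := hfk v0; omega
        have hmaxlt : ∀ x : V, x ≠ v0 → f x < f v0 := by
          intro x hx
          rcases lt_or_eq_of_le (hv0 x) with h | h
          · exact h
          · obtain ⟨p⟩ := hc.preconnected x v0
            obtain ⟨w, _, hw⟩ := hrank x v0 hx h p
            have := hv0 w; omega
        have hlt : Fintype.card ↥{x | x ≠ v0} < Fintype.card V := by
          have h := Fintype.card_subtype_lt (p := fun x => x ≠ v0) (x := v0) (by simp)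
          convert h using 2
          all_goals rfl
        have hsub : treedepth (G.induce {x | x ≠ v0}) ≤ k - 1 := by
          apply ih _ (by omega) _ _ (fun x => f x.1)
          · intro x
            have h1 : f x.1 < f v0 := hmaxlt x.1 x.2
            have h2 := hfk v0
            omega
          · exact aux_rank_induce hrank _
        rw [treedepth]
        rw [dif_neg hV, dif_pos hc]
        have hinf : (⨅ v : V, treedepth (G.induce {x | x ≠ v})) ≤ k - 1 :=
          le_trans (ciInf_le (OrderBot.bddBelow _) v0) hsub
        omega
      · rw [treedepth]
        rw [dif_neg hV, dif_neg hc]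
        haveI : Nonempty G.ConnectedComponent := ⟨G.connectedComponentMk (Classical.arbitrary V)⟩
        apply ciSup_le
        intro c
        have hout : ∃ x, x ∉ c.supp := by
          have hpre : ¬ G.Preconnected := fun hp => hc ⟨hp⟩
          rw [SimpleGraph.Preconnected] at hpre; push_neg at hpre
          obtain ⟨a, b, hab⟩ := hpre
          by_contra hall; push_neg at hall
          have ha := hall a; have hb := hall b
          rw [SimpleGraph.ConnectedComponent.mem_supp_iff] at ha hb
          exact hab (SimpleGraph.ConnectedComponent.exact (ha.trans hb.symm))
        obtain ⟨x0, hx0⟩ := hout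
        have hlt : Fintype.card ↥c.supp < Fintype.card V := by
          have h := Fintype.card_subtype_lt (p := fun x => x ∈ c.supp) (x := x0) hx0
          convert h using 2
        exact ih _ (by omega) _ _ (fun x => f x.1) (fun x => hfk x.1) (aux_rank_induce hrank _)

section Helly
variable {ι : Type} {T : SimpleGraph ι}

lemma aux_first_in :
    ∀ {u v : ι} (w : T.Walk u v) (Q : Set ι), v ∈ Q →
      ∃ (m : ι) (_ : m ∈ Q) (w1 : T.Walk u m) (w2 : T.Walk m v),
        w = w1.append w2 ∧ (∀ z ∈ w1.support, z ∈ Q → z = m) := by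
  intro u v w
  induction w with
  | nil =>
    intro Q hv
    exact ⟨_, hv, Walk.nil, Walk.nil, rfl, by simp⟩
  | @cons u x v h p ih =>
    intro Q hv
    by_cases hu : u ∈ Q
    · exact ⟨u, hu, Walk.nil, Walk.cons h p, rfl, by simp⟩
    · obtain ⟨m, hm, w1, w2, heq, hfirst⟩ := ih Q hv
      refine ⟨m, hm, Walk.cons h w1, w2, by rw [heq]; rfl, ?_⟩
      intro z hz hzQ
      rw [Walk.support_cons] at hz
      rcases List.mem_cons.mp hz with rfl | hz'
      · exact absurd hzQ hu
      · exact hfirst z hz' hzQ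

lemma aux_isPath_append_left {u m v : ι} {w1 : T.Walk u m} {w2 : T.Walk m v}
    (h : (w1.append w2).IsPath) : w1.IsPath := by
  rw [Walk.isPath_def] at h ⊢
  rw [Walk.support_append] at h
  exact h.of_append_left

lemma aux_path_subset (hT : T.IsTree) {S : Set ι} (hS : (T.induce S).Connected)
    {x y : ι} (hx : x ∈ S) (hy : y ∈ S) {p : T.Walk x y} (hp : p.IsPath) :
    ∀ z ∈ p.support, z ∈ S := by
  obtain ⟨q0⟩ := hS.preconnected ⟨x, hx⟩ ⟨y, hy⟩
  let q1 : T.Walk x y := q0.map (Embedding.induce S).toHom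
  have hq : ∀ z ∈ q1.support, z ∈ S := by
    intro z hz
    replace hz : z ∈ (q0.map (Embedding.induce S).toHom).support := hz
    rw [Walk.support_map] at hz
    obtain ⟨z', _, rfl⟩ := List.mem_map.mp hz
    exact z'.2
  have huniq := hT.IsAcyclic.path_unique ⟨p, hp⟩ q1.toPath
  have hsup : p.support = (q1.toPath : T.Walk x y).support := by
    rw [← huniq]
  intro z hz
  exact hq z (Walk.support_toPath_subset _ (hsup ▸ hz))

lemma aux_median (hT : T.IsTree) {p q r : ι} (wpq : T.Walk p q) (hpq : wpq.IsPath)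
    (wqr : T.Walk q r) (hqr : wqr.IsPath) (wrp : T.Walk r p) (hrp : wrp.IsPath) :
    ∃ m, m ∈ wpq.support ∧ m ∈ wqr.support ∧ m ∈ wrp.support := by
  obtain ⟨m, hmQ, w1, w2, heq, hfirst⟩ :=
    aux_first_in wrp {z | z ∈ wpq.support} (by simp [Walk.start_mem_support])
  have hmQ' : m ∈ wpq.support := hmQ
  have hw1path : w1.IsPath := aux_isPath_append_left (heq ▸ hrp)
  have hsegpath : (wpq.dropUntil m hmQ').IsPath := hpq.dropUntil hmQ'
  set seg := wpq.dropUntil m hmQ' with hseg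
  have hmrp : m ∈ wrp.support := by
    rw [heq, Walk.support_append]
    exact List.mem_append_left _ (Walk.end_mem_support w1)
  have hcand : (w1.append seg).IsPath := by
    rw [Walk.isPath_def, Walk.support_append, List.nodup_append]
    refine ⟨hw1path.support_nodup, hsegpath.support_nodup.tail, ?_⟩
    intro z hz1 b hz2 hzb
    subst hzb
    have hzQ : z ∈ wpq.support :=
      Walk.support_dropUntil_subset _ hmQ' (List.mem_of_mem_tail hz2)
    have hzm : z = m := hfirst z hz1 hzQ
    rw [hzm] at hz2
    have hcons : seg.support = m :: seg.support.tail := Walk.support_eq_cons seg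
    have hnd := hsegpath.support_nodup
    rw [hcons] at hnd
    exact (List.nodup_cons.mp hnd).1 hz2
  have huniq := hT.IsAcyclic.path_unique ⟨w1.append seg, hcand⟩ ⟨wqr.reverse, hqr.reverse⟩
  have hm_in : m ∈ (w1.append seg).support := by
    rw [Walk.support_append]
    exact List.mem_append_left _ (Walk.end_mem_support w1)
  have hsupeq : (w1.append seg).support = wqr.reverse.support := by
    have := congrArg (fun (P : T.Path r q) => (P : T.Walk r q).support) huniq
    simpa using this
  have hmqr : m ∈ wqr.support := by
    have := hsupeq ▸ hm_in
    rwa [Walk.support_reverse, List.mem_reverse] at this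
  exact ⟨m, hmQ', hmqr, hmrp⟩

lemma aux_helly3 (hT : T.IsTree) {S0 S1 S2 : Set ι}
    (h0 : (T.induce S0).Connected) (h1 : (T.induce S1).Connected)
    (h2 : (T.induce S2).Connected)
    (h01 : (S0 ∩ S1).Nonempty) (h12 : (S1 ∩ S2).Nonempty) (h20 : (S2 ∩ S0).Nonempty) :
    (S0 ∩ S1 ∩ S2).Nonempty := by
  obtain ⟨p, hp0, hp1⟩ := h01
  obtain ⟨q, hq1, hq2⟩ := h12
  obtain ⟨r, hr2, hr0⟩ := h20
  obtain ⟨wpq0⟩ := hT.isConnected.preconnected p q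
  obtain ⟨wqr0⟩ := hT.isConnected.preconnected q r
  obtain ⟨wrp0⟩ := hT.isConnected.preconnected r p
  obtain ⟨m, hm1, hm2, hm0⟩ := aux_median hT wpq0.bypass wpq0.bypass_isPath
    wqr0.bypass wqr0.bypass_isPath wrp0.bypass wrp0.bypass_isPath
  refine ⟨m, ⟨?_, ?_⟩, ?_⟩
  · exact aux_path_subset hT h0 hr0 hp0 wrp0.bypass_isPath m hm0
  · exact aux_path_subset hT h1 hp1 hq1 wpq0.bypass_isPath m hm1
  · exact aux_path_subset hT h2 hq2 hr2 wqr0.bypass_isPath m hm2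

lemma aux_inter_connected (hT : T.IsTree) {S S' : Set ι}
    (hS : (T.induce S).Connected) (hS' : (T.induce S').Connected)
    (hne : (S ∩ S').Nonempty) : (T.induce (S ∩ S')).Connected := by
  obtain ⟨x0, hx0⟩ := hne
  haveI : Nonempty ↥(S ∩ S') := ⟨⟨x0, hx0⟩⟩
  refine ⟨fun a b => ?_⟩
  obtain ⟨w0⟩ := hT.isConnected.preconnected a.1 b.1
  have hsub : ∀ z ∈ w0.bypass.support, z ∈ S ∩ S' := by
    intro z hz
    exact ⟨aux_path_subset hT hS a.2.1 b.2.1 w0.bypass_isPath z hz,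
           aux_path_subset hT hS' a.2.2 b.2.2 w0.bypass_isPath z hz⟩
  have := aux_reach_of_support w0.bypass hsub a.2 b.2
  simpa using this

lemma aux_helly_list (hT : T.IsTree) : ∀ (n : ℕ) (L : List (Set ι)), L.length ≤ n → L ≠ [] →
    (∀ A ∈ L, (T.induce A).Connected) →
    (∀ A ∈ L, ∀ B ∈ L, (A ∩ B).Nonempty) →
    ∃ x, ∀ A ∈ L, x ∈ A := by
  intro n
  induction n with
  | zero =>
    intro L hlen hne _ _
    cases L with
    | nil => exact absurd rfl hne
    | cons A rest => simp at hlen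
  | succ n ih =>
    intro L hlen hne hconn hpair
    match L with
    | [A] =>
      obtain ⟨x, hx⟩ := hpair A (by simp) A (by simp)
      exact ⟨x, by intro B hB; simp at hB; subst hB; exact hx.1⟩
    | A :: B :: rest =>
      have hconnAB : (T.induce (A ∩ B)).Connected :=
        aux_inter_connected hT (hconn A (by simp)) (hconn B (by simp))
          (hpair A (by simp) B (by simp))
      obtain ⟨x, hx⟩ := ih ((A ∩ B) :: rest) (by simp at hlen ⊢; omega) (by simp)
        (by
          intro C hC
          rcases List.mem_cons.mp hC with rfl | hC'
          · exact hconnAB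
          · exact hconn C (by simp [hC']))
        (by
          intro C hC D hD
          rcases List.mem_cons.mp hC with rfl | hC' <;> rcases List.mem_cons.mp hD with rfl | hD'
          · exact (hpair A (by simp) B (by simp)).imp (fun z hz => ⟨⟨hz.1, hz.2⟩, hz.1, hz.2⟩)
          · -- (A∩B) ∩ D
            have h3 := aux_helly3 hT (hconn A (by simp)) (hconn B (by simp)) (hconn D (by simp [hD']))
              (hpair A (by simp) B (by simp)) (hpair B (by simp) D (by simp [hD']))
              (hpair D (by simp [hD']) A (by simp))
            exact h3
          · -- D ∩ (A∩B)
            have h3 := aux_helly3 hT (hconn A (by simp)) (hconn B (by simp)) (hconn C (by simp [hC']))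
              (hpair A (by simp) B (by simp)) (hpair B (by simp) C (by simp [hC']))
              (hpair C (by simp [hC']) A (by simp))
            obtain ⟨z, ⟨hz1, hz2⟩, hz3⟩ := h3
            exact ⟨z, hz3, hz1, hz2⟩
          · exact hpair C (by simp [hC']) D (by simp [hD']))
      refine ⟨x, ?_⟩
      intro C hC
      rcases List.mem_cons.mp hC with rfl | hC'
      · exact (hx (C ∩ B) (by simp)).1
      rcases List.mem_cons.mp hC' with rfl | hC''
      · exact (hx (A ∩ C) (by simp)).2
      · exact hx C (by simp [hC''])

end Helly

section TW
variable {V : Type}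

lemma aux_tw_lower {G : SimpleGraph V} {n : ℕ} (B : Fin (n + 1) → Set V)
    (hBconn : ∀ w, (G.induce (B w)).Connected)
    (hBdisj : ∀ w w', w ≠ w' → Disjoint (B w) (B w'))
    (hBadj : ∀ w w', w ≠ w' → ∃ u ∈ B w, ∃ v ∈ B w', G.Adj u v)
    {k : ℕ} (hdec : HasTreeDecompositionOfWidthLE G k) : n ≤ k := by
  obtain ⟨ι, T, bag, hTree, hvert, hedge, hcard⟩ := hdec
  set S : Fin (n + 1) → Set ι := fun w => {x | ∃ v ∈ B w, v ∈ bag x} with hSdef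
  have hsub : ∀ (w : Fin (n + 1)) (v : V), v ∈ B w → {x : ι | v ∈ bag x} ⊆ S w :=
    fun w v hv x hx => ⟨v, hv, hx⟩
  have key : ∀ (w : Fin (n + 1)) (u v : ↥(B w)) (p : (G.induce (B w)).Walk u v)
      (x y : ι) (hx : u.1 ∈ bag x) (hy : v.1 ∈ bag y),
      (T.induce (S w)).Reachable ⟨x, hsub w u.1 u.2 hx⟩ ⟨y, hsub w v.1 v.2 hy⟩ := by
    intro w u v p
    induction p with
    | nil =>
      intro x y hx hy
      obtain ⟨q⟩ := (hvert _).preconnected (⟨x, hx⟩ : ↥{z : ι | _ ∈ bag z}) ⟨y, hy⟩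
      exact aux_mono_reach (hsub w _ (by exact Subtype.prop _)) ⟨q⟩
    | @cons u' z' v' h p ih =>
      intro x y hx hy
      have hGadj : G.Adj u'.1 z'.1 := by simpa using h
      obtain ⟨x0, hx0u, hx0z⟩ := hedge u'.1 z'.1 hGadj
      have r1 : (T.induce (S w)).Reachable ⟨x, hsub w u'.1 u'.2 hx⟩ ⟨x0, hsub w u'.1 u'.2 hx0u⟩ := by
        obtain ⟨q⟩ := (hvert u'.1).preconnected ⟨x, hx⟩ ⟨x0, hx0u⟩
        exact aux_mono_reach (hsub w u'.1 u'.2) ⟨q⟩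
      exact r1.trans (ih x0 y hx0z hy)
  have hSconn : ∀ w, (T.induce (S w)).Connected := by
    intro w
    obtain ⟨u⟩ := (hBconn w).nonempty
    obtain ⟨xu⟩ := (hvert u.1).nonempty
    haveI : Nonempty ↥(S w) := ⟨⟨xu.1, hsub w u.1 u.2 xu.2⟩⟩
    refine ⟨fun aa bb => ?_⟩
    obtain ⟨va, hva, hbaga⟩ := aa.2
    obtain ⟨vb, hvb, hbagb⟩ := bb.2
    obtain ⟨pw⟩ := (hBconn w).preconnected ⟨va, hva⟩ ⟨vb, hvb⟩
    have hreach := key w ⟨va, hva⟩ ⟨vb, hvb⟩ pw aa.1 bb.1 hbaga hbagb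
    have ha : aa = ⟨aa.1, hsub w va hva hbaga⟩ := by ext; rfl
    have hb : bb = ⟨bb.1, hsub w vb hvb hbagb⟩ := by ext; rfl
    rw [ha, hb]
    exact hreach
  have hSpair : ∀ w w', (S w ∩ S w').Nonempty := by
    intro w w'
    by_cases hww : w = w'
    · subst hww
      obtain ⟨u⟩ := (hBconn w).nonempty
      obtain ⟨xu⟩ := (hvert u.1).nonempty
      exact ⟨xu.1, ⟨u.1, u.2, xu.2⟩, ⟨u.1, u.2, xu.2⟩⟩
    · obtain ⟨u, hu, v, hv, hadj⟩ := hBadj w w' hww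
      obtain ⟨x0, h1, h2⟩ := hedge u v hadj
      exact ⟨x0, ⟨u, hu, h1⟩, ⟨v, hv, h2⟩⟩
  obtain ⟨x, hx⟩ := aux_helly_list hTree (List.ofFn S).length (List.ofFn S) le_rfl
    (by simp)
    (by
      intro A hA
      obtain ⟨i, rfl⟩ := List.mem_ofFn.mp hA
      exact hSconn i)
    (by
      intro A hA C hC
      obtain ⟨i, rfl⟩ := List.mem_ofFn.mp hA
      obtain ⟨j, rfl⟩ := List.mem_ofFn.mp hC
      exact hSpair i j)
  have hrep : ∀ w, ∃ v, v ∈ B w ∧ v ∈ bag x := by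
    intro w
    have hmem : S w ∈ List.ofFn S := List.mem_ofFn.mpr ⟨w, rfl⟩
    obtain ⟨v, hv1, hv2⟩ := hx (S w) hmem
    exact ⟨v, hv1, hv2⟩
  choose rep hrepB hrepbag using hrep
  have hinj : Function.Injective rep := by
    intro w w' h
    by_contra hne
    exact Set.disjoint_left.mp (hBdisj w w' hne) (hrepB w) (h ▸ hrepB w')
  have hcardle : n + 1 ≤ (bag x).card := by
    have := Finset.card_le_card_of_injOn (s := Finset.univ) rep (fun w _ => hrepbag w) (Set.injOn_of_injective hinj)
    simpa using this
  have := hcard x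
  omega

lemma aux_trivial_dec [Fintype V] (G : SimpleGraph V) :
    HasTreeDecompositionOfWidthLE G (Fintype.card V) := by
  refine ⟨Unit, ⊥, fun _ => Finset.univ, ⟨?_, ?_⟩, ?_, ?_, ?_⟩
  · refine ⟨fun a b => ?_⟩
    rw [Subsingleton.elim a b]
  · exact isAcyclic_bot
  · intro v
    haveI : Nonempty ↥{x : Unit | v ∈ (Finset.univ : Finset V)} := ⟨⟨(), by simp⟩⟩
    refine ⟨fun a b => ?_⟩
    rw [Subsingleton.elim a b]
  · intro u v _
    exact ⟨(), by simp, by simp⟩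
  · intro _
    simp

lemma aux_tw_ge [Fintype V] {G : SimpleGraph V} {n : ℕ} (B : Fin (n + 1) → Set V)
    (hBconn : ∀ w, (G.induce (B w)).Connected)
    (hBdisj : ∀ w w', w ≠ w' → Disjoint (B w) (B w'))
    (hBadj : ∀ w w', w ≠ w' → ∃ u ∈ B w, ∃ v ∈ B w', G.Adj u v) :
    n ≤ treewidth G := by
  have hne : {k | HasTreeDecompositionOfWidthLE G k}.Nonempty := ⟨_, aux_trivial_dec G⟩
  unfold treewidth
  exact le_csInf hne (fun k hk => aux_tw_lower B hBconn hBdisj hBadj hk)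

end TW

section Abstract
variable {V : Type} {G : SimpleGraph V}

/-- The induced subgraph on a vertex set. -/
def auxSub (G : SimpleGraph V) (Sv : Set V) : G.Subgraph where
  verts := Sv
  Adj x y := x ∈ Sv ∧ y ∈ Sv ∧ G.Adj x y
  adj_sub h := h.2.2
  edge_vert h := h.1
  symm := ⟨fun x y h => ⟨h.2.1, h.1, h.2.2.symm⟩⟩

lemma auxSub_coe_adj {Sv : Set V} (u v : ↥(auxSub G Sv).verts) :
    (auxSub G Sv).coe.Adj u v ↔ G.Adj u.1 v.1 := by
  constructor
  · intro h
    exact h.2.2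
  · intro h
    exact ⟨u.2, v.2, h⟩

lemma aux_isometric (a : V) (W : Set V)
    (hadjA : ∀ x, G.Adj a x ↔ x ∈ W) :
    (auxSub G (insert a W)).IsIsometric := by
  intro x y
  by_cases hxy : x = y
  · subst hxy
    simp [SimpleGraph.dist_self]
  · have hne : x.1 ≠ y.1 := fun h => hxy (Subtype.ext h)
    by_cases hadj : G.Adj x.1 y.1
    · rw [SimpleGraph.dist_eq_one_iff_adj.mpr hadj,
        SimpleGraph.dist_eq_one_iff_adj.mpr ((auxSub_coe_adj x y).mpr hadj)]
    · have hxW : x.1 ∈ W := by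
        rcases x.2 with h | h
        · exfalso
          rcases y.2 with h' | h'
          · exact hne (h.trans h'.symm)
          · exact hadj (by rw [h]; exact (hadjA y.1).mpr h')
        · exact h
      have hyW : y.1 ∈ W := by
        rcases y.2 with h | h
        · exfalso
          rcases x.2 with h' | h'
          · exact hne (h'.trans h.symm)
          · exact hadj (by rw [h]; exact ((hadjA x.1).mpr h').symm)
        · exact h
      have h1 : G.Adj x.1 a := ((hadjA x.1).mpr hxW).symm
      have h2 : G.Adj a y.1 := (hadjA y.1).mpr hyW
      have hG : G.dist x.1 y.1 = 2 := aux_dist_two hne hadj h1 h2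
      have hH : (auxSub G (insert a W)).coe.dist x y = 2 := by
        refine aux_dist_two (z := ⟨a, Set.mem_insert a W⟩) hxy ?_ ?_ ?_
        · intro hc
          exact hadj ((auxSub_coe_adj x y).mp hc)
        · exact (auxSub_coe_adj _ _).mpr h1
        · exact (auxSub_coe_adj _ _).mpr h2
      rw [hG, hH]

lemma aux_inApex {τ U : Type} (a : V) (Sv : Set V) (ha : a ∈ Sv)
    (X : SimpleGraph U) (t : V → τ) (g : V → U)
    (hadj : ∀ x y, (auxSub G Sv).Adj x y → x ≠ a → y ≠ a → t x = t y ∧ X.Adj (g x) (g y))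
    (hinj : ∀ x y, x ∈ Sv → y ∈ Sv → x ≠ a → y ≠ a → t x = t y → g x = g y → x = y) :
    InApex (auxSub G Sv).coe X := by
  refine ⟨⟨a, ha⟩, ?_⟩
  intro c
  have hKadj : ∀ (w w' : ↥{x : ↥(auxSub G Sv).verts | x ≠ ⟨a, ha⟩}),
      ((auxSub G Sv).coe.induce {x | x ≠ ⟨a, ha⟩}).Adj w w' →
      (auxSub G Sv).Adj w.1.1 w'.1.1 := by
    intro w w' h
    have : (auxSub G Sv).coe.Adj w.1 w'.1 := by simpa using h
    exact ⟨w.1.2, w'.1.2, (auxSub_coe_adj _ _).mp this⟩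
  have hne_a : ∀ (w : ↥{x : ↥(auxSub G Sv).verts | x ≠ ⟨a, ha⟩}), w.1.1 ≠ a := by
    intro w hw
    exact w.2 (Subtype.ext hw)
  refine ⟨fun z => g z.1.1.1, ?_, ?_⟩
  · intro z z' heq
    have hc1 := (SimpleGraph.ConnectedComponent.mem_supp_iff _ _).mp z.2
    have hc2 := (SimpleGraph.ConnectedComponent.mem_supp_iff _ _).mp z'.2
    have hreach := SimpleGraph.ConnectedComponent.exact (hc1.trans hc2.symm)
    have ht : t z.1.1.1 = t z'.1.1.1 := by
      refine aux_reach_const (σ := fun w => t w.1.1) ?_ hreach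
      intro w w' hww
      exact (hadj _ _ (hKadj w w' hww) (hne_a w) (hne_a w')).1
    have := hinj z.1.1.1 z'.1.1.1 z.1.1.2 z'.1.1.2 (hne_a z.1) (hne_a z'.1) ht heq
    exact Subtype.ext (Subtype.ext (Subtype.ext this))
  · intro u v huv
    have hK : ((auxSub G Sv).coe.induce {x | x ≠ ⟨a, ha⟩}).Adj u.1 v.1 := by
      simpa using huv
    exact (hadj _ _ (hKadj u.1 v.1 hK) (hne_a u.1) (hne_a v.1)).2

lemma aux_rank_of_sep [Fintype V] {H : G.Subgraph} {rk : V → ℕ} {k : ℕ}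
    (hk : ∀ x, x ∈ H.verts → rk x < k)
    (hsep : ∀ u v : V, u ∈ H.verts → v ∈ H.verts → u ≠ v → rk u = rk v →
      (∀ z, H.Adj u z → rk u < rk z) ∨
      (∃ (α : Type) (σ : V → α), σ u ≠ σ v ∧
        ∀ x y, H.Adj x y → rk x ≤ rk u → rk y ≤ rk u → σ x = σ y)) :
    treedepth H.coe ≤ k := by
  apply aux_treedepth_le (Fintype.card ↥H.verts) _ le_rfl _ _ (fun x => rk x.1)
    (fun x => hk x.1 x.2)
  intro u v hne hfeq p
  have hne' : u.1 ≠ v.1 := fun h => hne (Subtype.ext h)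
  rcases hsep u.1 v.1 u.2 v.2 hne' hfeq with h | ⟨α, σ, hσne, hσ⟩
  · cases p with
    | nil => exact absurd rfl hne
    | @cons _ w _ hadj p' =>
      refine ⟨w, by simp, h w.1 hadj⟩
  · by_contra hcon
    push_neg at hcon
    have hall : ∀ x ∈ p.support, rk x.1 ≤ rk u.1 := by
      intro x hx
      have := hcon x hx
      omega
    exact hσne (aux_walk_const (σ := fun (x : ↥H.verts) => σ x.1)
      (rk := fun x => rk x.1) (r := rk u.1)
      (fun x y hxy hx hy => hσ x.1 y.1 hxy hx hy) p hall)

end Abstract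

section Construction

abbrev auxP (n : ℕ) := Fin (n + 1) × Fin (n + 1)
abbrev auxV (n : ℕ) := (Unit ⊕ Unit) ⊕ (auxP n ⊕ (auxP n × auxP n × Fin 5))

variable {n : ℕ}

def va (n : ℕ) : auxV n := Sum.inl (Sum.inl ())
def vb (n : ℕ) : auxV n := Sum.inl (Sum.inr ())
def vnode (p : auxP n) : auxV n := Sum.inr (Sum.inl p)
def vmid (p q : auxP n) (i : Fin 5) : auxV n := Sum.inr (Sum.inr (p, q, i))

@[simp] lemma va_ne_vb : va n ≠ vb n := by simp [va, vb]
@[simp] lemma va_ne_vnode (p : auxP n) : va n ≠ vnode p := by simp [va, vnode]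
@[simp] lemma va_ne_vmid (p q : auxP n) (i : Fin 5) : va n ≠ vmid p q i := by simp [va, vmid]
@[simp] lemma vb_ne_vnode (p : auxP n) : vb n ≠ vnode p := by simp [vb, vnode]
@[simp] lemma vb_ne_vmid (p q : auxP n) (i : Fin 5) : vb n ≠ vmid p q i := by simp [vb, vmid]
@[simp] lemma vnode_ne_vmid (p p' q' : auxP n) (i : Fin 5) : vnode p ≠ vmid p' q' i := by
  simp [vnode, vmid]
@[simp] lemma vnode_inj {p p' : auxP n} : vnode p = vnode p' ↔ p = p' := by simp [vnode]
@[simp] lemma vmid_inj {p q p' q' : auxP n} {i i' : Fin 5} :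
    vmid p q i = vmid p' q' i' ↔ p = p' ∧ q = q' ∧ i = i' := by simp [vmid]

def auxEAdj (p q : auxP n) : Prop :=
  (p.1 = q.1 ∧ q.2.val = p.2.val + 1) ∨ (p.1.val < p.2.val ∧ q = (p.2, p.1))

lemma auxEAdj_antisymm {p q : auxP n} (h : auxEAdj p q) (h' : auxEAdj q p) : False := by
  obtain ⟨p1, p2⟩ := p
  obtain ⟨q1, q2⟩ := q
  simp only [auxEAdj] at h h'
  rcases h with ⟨h1, h2⟩ | ⟨h1, e⟩ <;> rcases h' with ⟨h1', h2'⟩ | ⟨h1', e'⟩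
  · omega
  · rw [Prod.mk.injEq] at e'
    obtain ⟨ea, eb⟩ := e'
    have v1 : p1.val = q1.val := by rw [h1]
    have v2 : p1.val = q2.val := by rw [ea]
    have v3 : p2.val = q1.val := by rw [eb]
    omega
  · rw [Prod.mk.injEq] at e
    obtain ⟨ea, eb⟩ := e
    have v1 : q1.val = p1.val := by rw [h1']
    have v2 : q1.val = p2.val := by rw [ea]
    have v3 : q2.val = p1.val := by rw [eb]
    omega
  · rw [Prod.mk.injEq] at e e'
    obtain ⟨ea, eb⟩ := e
    have v2 : q1.val = p2.val := by rw [ea]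
    have v3 : q2.val = p1.val := by rw [eb]
    omega

def auxW1 (n : ℕ) : Set (auxV n) :=
  {x | ∃ p q i, auxEAdj p q ∧ x = vmid p q i ∧ (i.val = 1 ∨ i.val = 2 ∨ i.val = 3)}

def auxW2 (n : ℕ) : Set (auxV n) :=
  {x | (∃ p, x = vnode p) ∨
    ∃ p q i, auxEAdj p q ∧ x = vmid p q i ∧ (i.val = 0 ∨ i.val = 1 ∨ i.val = 3 ∨ i.val = 4)}

def auxRel (n : ℕ) (x y : auxV n) : Prop :=
  (x = va n ∧ y ∈ auxW1 n) ∨ (x = vb n ∧ y ∈ auxW2 n) ∨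
  (∃ p q i, auxEAdj p q ∧
    ((x = vnode p ∧ y = vmid p q i ∧ i.val = 0) ∨
     (x = vnode q ∧ y = vmid p q i ∧ i.val = 4))) ∨
  (∃ p q i j, auxEAdj p q ∧ x = vmid p q i ∧ y = vmid p q j ∧ j.val = i.val + 1)

def auxG (n : ℕ) : SimpleGraph (auxV n) := SimpleGraph.fromRel (auxRel n)

@[simp] lemma va_not_W1 : va n ∉ auxW1 n := by
  rintro ⟨p, q, i, _, h, _⟩; simp at h
@[simp] lemma va_not_W2 : va n ∉ auxW2 n := by
  rintro (⟨p, h⟩ | ⟨p, q, i, _, h, _⟩) <;> simp at h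
@[simp] lemma vb_not_W1 : vb n ∉ auxW1 n := by
  rintro ⟨p, q, i, _, h, _⟩; simp at h
@[simp] lemma vb_not_W2 : vb n ∉ auxW2 n := by
  rintro (⟨p, h⟩ | ⟨p, q, i, _, h, _⟩) <;> simp at h

lemma aux_adjA (x : auxV n) : (auxG n).Adj (va n) x ↔ x ∈ auxW1 n := by
  rw [auxG, SimpleGraph.fromRel_adj]
  constructor
  · rintro ⟨hne, h | h⟩
    · rcases h with ⟨_, hW⟩ | ⟨hab, _⟩ | ⟨p, q, i, _, (⟨h1, _⟩ | ⟨h1, _⟩)⟩ |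
        ⟨p, q, i, j, _, h1, _⟩
      · exact hW
      · exact absurd hab va_ne_vb
      · exact absurd h1 (va_ne_vnode p)
      · exact absurd h1 (va_ne_vnode q)
      · exact absurd h1 (va_ne_vmid p q i)
    · rcases h with ⟨_, hW⟩ | ⟨_, hW⟩ | ⟨p, q, i, _, (⟨_, h2, _⟩ | ⟨_, h2, _⟩)⟩ |
        ⟨p, q, i, j, _, _, h2, _⟩
      · exact absurd hW va_not_W1
      · exact absurd hW va_not_W2
      · exact absurd h2 (va_ne_vmid p q i)
      · exact absurd h2 (va_ne_vmid p q i)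
      · exact absurd h2 (va_ne_vmid p q j)
  · intro hW
    obtain ⟨p, q, i, he, hx, hi⟩ := hW
    subst hx
    exact ⟨va_ne_vmid p q i, Or.inl (Or.inl ⟨rfl, ⟨p, q, i, he, rfl, hi⟩⟩)⟩

lemma aux_adjB (x : auxV n) : (auxG n).Adj (vb n) x ↔ x ∈ auxW2 n := by
  rw [auxG, SimpleGraph.fromRel_adj]
  constructor
  · rintro ⟨hne, h | h⟩
    · rcases h with ⟨hab, _⟩ | ⟨_, hW⟩ | ⟨p, q, i, _, (⟨h1, _⟩ | ⟨h1, _⟩)⟩ |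
        ⟨p, q, i, j, _, h1, _⟩
      · exact absurd hab.symm va_ne_vb
      · exact hW
      · exact absurd h1 (vb_ne_vnode p)
      · exact absurd h1 (vb_ne_vnode q)
      · exact absurd h1 (vb_ne_vmid p q i)
    · rcases h with ⟨_, hW⟩ | ⟨_, hW⟩ | ⟨p, q, i, _, (⟨_, h2, _⟩ | ⟨_, h2, _⟩)⟩ |
        ⟨p, q, i, j, _, _, h2, _⟩
      · exact absurd hW vb_not_W1
      · exact absurd hW vb_not_W2
      · exact absurd h2 (vb_ne_vmid p q i)
      · exact absurd h2 (vb_ne_vmid p q i)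
      · exact absurd h2 (vb_ne_vmid p q j)
  · intro hW
    rcases hW with ⟨p, rfl⟩ | ⟨p, q, i, he, hx, hi⟩
    · exact ⟨vb_ne_vnode p, Or.inl (Or.inr (Or.inl ⟨rfl, Or.inl ⟨p, rfl⟩⟩))⟩
    · subst hx
      exact ⟨vb_ne_vmid p q i, Or.inl (Or.inr (Or.inl ⟨rfl, Or.inr ⟨p, q, i, he, rfl, hi⟩⟩))⟩

end Construction

section Construction2
variable {n : ℕ}

def auxT1 (x : auxV n) : Option (auxP n × auxP n) :=
  match x with
  | Sum.inr (Sum.inr (p, q, _)) => some (p, q)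
  | _ => none

def auxGv (i : Fin 5) : Fin 3 := if i.val = 1 then 0 else if i.val = 2 then 1 else 2

def auxG1 (x : auxV n) : Fin 3 :=
  match x with
  | Sum.inr (Sum.inr (_, _, i)) => auxGv i
  | _ => 0

@[simp] lemma auxT1_vmid (p q : auxP n) (i : Fin 5) : auxT1 (vmid p q i) = some (p, q) := rfl
@[simp] lemma auxG1_vmid (p q : auxP n) (i : Fin 5) : auxG1 (vmid p q i) = auxGv i := rfl

def auxRelIdx (p q : auxP n) : Fin 3 :=
  if p.1 = q.1 ∧ q.2.val = p.2.val + 1 then 0 else if p.1 = q.1 then 1 else 2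

def auxXadj (p q : auxP n) : Prop := auxEAdj p q ∨ auxEAdj q p

lemma aux_xadj_cases {p r : auxP n} (h : auxXadj p r) :
    (p.1 = r.1 ∧ r.2.val = p.2.val + 1) ∨ (p.1 = r.1 ∧ p.2.val = r.2.val + 1) ∨
    (r = (p.2, p.1) ∧ p.1 ≠ p.2) := by
  rcases h with h | h <;> rcases h with ⟨h1, h2⟩ | ⟨h1, h2⟩
  · exact Or.inl ⟨h1, h2⟩
  · refine Or.inr (Or.inr ⟨h2, ?_⟩)
    intro he
    have : p.1.val = p.2.val := by rw [he]
    omega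
  · exact Or.inr (Or.inl ⟨h1.symm, h2⟩)
  · rw [Prod.mk.injEq] at h2
    obtain ⟨ha, hb⟩ := h2
    refine Or.inr (Or.inr ⟨?_, ?_⟩)
    · rw [Prod.ext_iff]
      exact ⟨hb.symm ▸ rfl, ha.symm ▸ rfl⟩
    · intro he
      have v1 : p.1.val = r.2.val := by rw [ha]
      have v2 : p.2.val = r.1.val := by rw [hb]
      have v3 : p.1.val = p.2.val := by rw [he]
      omega

lemma aux_relIdx_eq {p r : auxP n} (h : auxXadj p r) :
    ((p.1 = r.1 ∧ r.2.val = p.2.val + 1) ∧ auxRelIdx p r = 0) ∨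
    ((p.1 = r.1 ∧ p.2.val = r.2.val + 1) ∧ auxRelIdx p r = 1) ∨
    ((r = (p.2, p.1) ∧ p.1 ≠ p.2) ∧ auxRelIdx p r = 2) := by
  rcases aux_xadj_cases h with ⟨h1, h2⟩ | ⟨h1, h2⟩ | ⟨h1, h2⟩
  · exact Or.inl ⟨⟨h1, h2⟩, by rw [auxRelIdx, if_pos ⟨h1, h2⟩]⟩
  · refine Or.inr (Or.inl ⟨⟨h1, h2⟩, ?_⟩)
    rw [auxRelIdx, if_neg, if_pos h1]
    rintro ⟨_, hv⟩
    omega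
  · refine Or.inr (Or.inr ⟨⟨h1, h2⟩, ?_⟩)
    have hne : ¬ p.1 = r.1 := by
      rw [h1]
      exact fun he => h2 he
    rw [auxRelIdx, if_neg (fun hc => hne hc.1), if_neg hne]

lemma aux_relIdx_inj {p q q' : auxP n} (h : auxXadj p q) (h' : auxXadj p q')
    (he : auxRelIdx p q = auxRelIdx p q') : q = q' := by
  rcases aux_relIdx_eq h with ⟨⟨h1, h2⟩, hr⟩ | ⟨⟨h1, h2⟩, hr⟩ | ⟨⟨h1, h2⟩, hr⟩ <;>
    rcases aux_relIdx_eq h' with ⟨⟨h1', h2'⟩, hr'⟩ | ⟨⟨h1', h2'⟩, hr'⟩ | ⟨⟨h1', h2'⟩, hr'⟩ <;>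
    rw [hr, hr'] at he <;> first
      | (exfalso; exact absurd he (by decide))
      | skip
  · rw [Prod.ext_iff]
    exact ⟨h1 ▸ h1'.symm ▸ rfl, Fin.ext (by omega)⟩
  · rw [Prod.ext_iff]
    exact ⟨h1 ▸ h1'.symm ▸ rfl, Fin.ext (by omega)⟩
  · rw [h1, h1']

def auxT2 (x : auxV n) : Option (auxP n) :=
  match x with
  | Sum.inr (Sum.inl p) => some p
  | Sum.inr (Sum.inr (p, q, i)) => some (if i.val ≤ 1 then p else q)
  | _ => none

def auxG2 (x : auxV n) : Option (Fin 3 × Bool) :=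
  match x with
  | Sum.inr (Sum.inr (p, q, i)) =>
      some (if i.val ≤ 1 then auxRelIdx p q else auxRelIdx q p, decide (i.val = 1 ∨ i.val = 3))
  | _ => none

@[simp] lemma auxT2_vnode (p : auxP n) : auxT2 (vnode p) = some p := rfl
@[simp] lemma auxT2_vmid (p q : auxP n) (i : Fin 5) :
    auxT2 (vmid p q i) = some (if i.val ≤ 1 then p else q) := rfl
@[simp] lemma auxG2_vnode (p : auxP n) : auxG2 (vnode p) = none := rfl
@[simp] lemma auxG2_vmid (p q : auxP n) (i : Fin 5) :
    auxG2 (vmid p q i) =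
      some (if i.val ≤ 1 then auxRelIdx p q else auxRelIdx q p, decide (i.val = 1 ∨ i.val = 3)) := rfl

lemma aux_star_adj1 (l : Fin 3) : (subdividedStar 3).Adj none (some (l, false)) := by
  rw [subdividedStar, SimpleGraph.fromRel_adj]
  exact ⟨by simp, Or.inl (Or.inl ⟨rfl, l, rfl⟩)⟩

lemma aux_star_adj2 (l : Fin 3) : (subdividedStar 3).Adj (some (l, false)) (some (l, true)) := by
  rw [subdividedStar, SimpleGraph.fromRel_adj]
  exact ⟨by simp, Or.inl (Or.inr ⟨l, rfl, rfl⟩)⟩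

lemma aux_star_adj_inv_true {l : Fin 3} {o : Option (Fin 3 × Bool)}
    (h : (subdividedStar 3).Adj (some (l, true)) o) : o = some (l, false) := by
  rw [subdividedStar, SimpleGraph.fromRel_adj] at h
  obtain ⟨hne, h | h⟩ := h
  · rcases h with ⟨h1, _⟩ | ⟨i, h1, _⟩
    · simp at h1
    · simp at h1
  · rcases h with ⟨h1, i, h2⟩ | ⟨i, h1, h2⟩
    · simp at h2
    · simp only [Option.some.injEq, Prod.mk.injEq] at h2
      rw [h1, h2.1]

lemma aux_star_adj_inv_some {i j : Fin 3} {bi bj : Bool}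
    (h : (subdividedStar 3).Adj (some (i, bi)) (some (j, bj))) : i = j := by
  rw [subdividedStar, SimpleGraph.fromRel_adj] at h
  obtain ⟨hne, h | h⟩ := h
  · rcases h with ⟨h1, _⟩ | ⟨l, h1, h2⟩
    · simp at h1
    · simp only [Option.some.injEq, Prod.mk.injEq] at h1 h2
      exact (h1.1).trans (h2.1).symm
  · rcases h with ⟨h1, _⟩ | ⟨l, h1, h2⟩
    · simp at h1
    · simp only [Option.some.injEq, Prod.mk.injEq] at h1 h2
      exact (h2.1).trans (h1.1).symm

end Construction2

section Construction3
variable {n : ℕ}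

lemma aux_E1 {x y : auxV n} (hx : x ∈ auxW1 n) (hy : y ∈ auxW1 n) (h : (auxG n).Adj x y) :
    auxT1 x = auxT1 y ∧ (SimpleGraph.pathGraph 3).Adj (auxG1 x) (auxG1 y) := by
  obtain ⟨p, q, i, he, rfl, hi⟩ := hx
  obtain ⟨p', q', i', he', rfl, hi'⟩ := hy
  rw [auxG, SimpleGraph.fromRel_adj] at h
  obtain ⟨hne, hrel⟩ := h
  have key : p = p' ∧ q = q' ∧ (i'.val = i.val + 1 ∨ i.val = i'.val + 1) := by
    rcases hrel with hr | hr
    · rcases hr with ⟨h1, _⟩ | ⟨h1, _⟩ | ⟨P, Q, I, _, (⟨h1, _⟩ | ⟨h1, _⟩)⟩ |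
        ⟨P, Q, I, J, _, h1, h2, h3⟩
      · exact absurd h1.symm (va_ne_vmid _ _ _)
      · exact absurd h1.symm (vb_ne_vmid _ _ _)
      · exact absurd h1.symm (vnode_ne_vmid _ _ _ _)
      · exact absurd h1.symm (vnode_ne_vmid _ _ _ _)
      · rw [vmid_inj] at h1 h2
        obtain ⟨rfl, rfl, rfl⟩ := h1
        obtain ⟨ha, hb, rfl⟩ := h2
        exact ⟨ha.symm, hb.symm, Or.inl h3⟩
    · rcases hr with ⟨h1, _⟩ | ⟨h1, _⟩ | ⟨P, Q, I, _, (⟨h1, _⟩ | ⟨h1, _⟩)⟩ |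
        ⟨P, Q, I, J, _, h1, h2, h3⟩
      · exact absurd h1.symm (va_ne_vmid _ _ _)
      · exact absurd h1.symm (vb_ne_vmid _ _ _)
      · exact absurd h1.symm (vnode_ne_vmid _ _ _ _)
      · exact absurd h1.symm (vnode_ne_vmid _ _ _ _)
      · rw [vmid_inj] at h1 h2
        obtain ⟨rfl, rfl, rfl⟩ := h1
        obtain ⟨ha, hb, rfl⟩ := h2
        exact ⟨ha, hb, Or.inr h3⟩
  obtain ⟨rfl, rfl, hk⟩ := key
  refine ⟨rfl, ?_⟩
  rw [SimpleGraph.pathGraph_adj]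
  simp only [auxG1_vmid, auxGv]
  split_ifs <;> simp <;> omega

lemma aux_inj1 {x y : auxV n} (hx : x ∈ auxW1 n) (hy : y ∈ auxW1 n)
    (ht : auxT1 x = auxT1 y) (hg : auxG1 x = auxG1 y) : x = y := by
  obtain ⟨p, q, i, he, rfl, hi⟩ := hx
  obtain ⟨p', q', i', he', rfl, hi'⟩ := hy
  simp only [auxT1_vmid, Option.some.injEq, Prod.mk.injEq] at ht
  obtain ⟨rfl, rfl⟩ := ht
  simp only [auxG1_vmid] at hg
  have hvv : i.val = i'.val := by
    obtain ⟨iv, hivlt⟩ := i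
    obtain ⟨iv', hivlt'⟩ := i'
    simp only [auxGv] at hg
    simp only at hi hi' ⊢
    interval_cases iv <;> interval_cases iv' <;> simp_all
  rw [vmid_inj]
  exact ⟨rfl, rfl, Fin.ext hvv⟩

lemma aux_midW2_val {p q : auxP n} {i : Fin 5} (hx : vmid p q i ∈ auxW2 n) :
    i.val = 0 ∨ i.val = 1 ∨ i.val = 3 ∨ i.val = 4 := by
  rcases hx with ⟨P, hP⟩ | ⟨P, Q, I, _, hPQ, hI⟩
  · exact absurd hP.symm (vnode_ne_vmid _ _ _ _)
  · rw [vmid_inj] at hPQ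
    obtain ⟨_, _, hIv⟩ := hPQ
    rw [hIv]
    exact hI

lemma aux_E2_rel {x y : auxV n} (hx : x ∈ auxW2 n) (hy : y ∈ auxW2 n) (h : auxRel n x y) :
    auxT2 x = auxT2 y ∧ (subdividedStar 3).Adj (auxG2 x) (auxG2 y) := by
  rcases h with ⟨h1, _⟩ | ⟨h1, _⟩ | ⟨p, q, i, he, (⟨h1, h2, h3⟩ | ⟨h1, h2, h3⟩)⟩ |
    ⟨p, q, i, j, he, h1, h2, h3⟩
  · subst h1; exact absurd hx va_not_W2
  · subst h1; exact absurd hx vb_not_W2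
  · subst h1; subst h2
    constructor
    · simp only [auxT2_vnode, auxT2_vmid]
      rw [if_pos (by omega : i.val ≤ 1)]
    · simp only [auxG2_vnode, auxG2_vmid]
      rw [if_pos (by omega : i.val ≤ 1)]
      have hb : decide (i.val = 1 ∨ i.val = 3) = false := by simp [h3]
      rw [hb]
      exact aux_star_adj1 _
  · subst h1; subst h2
    constructor
    · simp only [auxT2_vnode, auxT2_vmid]
      rw [if_neg (by omega : ¬ i.val ≤ 1)]
    · simp only [auxG2_vnode, auxG2_vmid]
      rw [if_neg (by omega : ¬ i.val ≤ 1)]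
      have hb : decide (i.val = 1 ∨ i.val = 3) = false := by simp [h3]
      rw [hb]
      exact aux_star_adj1 _
  · subst h1; subst h2
    have hiv := aux_midW2_val hx
    have hjv := aux_midW2_val hy
    rcases (show (i.val = 0 ∧ j.val = 1) ∨ (i.val = 3 ∧ j.val = 4) by omega) with
      ⟨hi0, hj1⟩ | ⟨hi3, hj4⟩
    · constructor
      · simp only [auxT2_vmid]
        rw [if_pos (by omega : i.val ≤ 1), if_pos (by omega : j.val ≤ 1)]
      · simp only [auxG2_vmid]
        rw [if_pos (by omega : i.val ≤ 1), if_pos (by omega : j.val ≤ 1)]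
        have b1 : decide (i.val = 1 ∨ i.val = 3) = false := by simp [hi0]
        have b2 : decide (j.val = 1 ∨ j.val = 3) = true := by simp [hj1]
        rw [b1, b2]
        exact aux_star_adj2 _
    · constructor
      · simp only [auxT2_vmid]
        rw [if_neg (by omega : ¬ i.val ≤ 1), if_neg (by omega : ¬ j.val ≤ 1)]
      · simp only [auxG2_vmid]
        rw [if_neg (by omega : ¬ i.val ≤ 1), if_neg (by omega : ¬ j.val ≤ 1)]
        have b1 : decide (i.val = 1 ∨ i.val = 3) = true := by simp [hi3]
        have b2 : decide (j.val = 1 ∨ j.val = 3) = false := by simp [hj4]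
        rw [b1, b2]
        exact (aux_star_adj2 _).symm

lemma aux_E2 {x y : auxV n} (hx : x ∈ auxW2 n) (hy : y ∈ auxW2 n) (h : (auxG n).Adj x y) :
    auxT2 x = auxT2 y ∧ (subdividedStar 3).Adj (auxG2 x) (auxG2 y) := by
  rw [auxG, SimpleGraph.fromRel_adj] at h
  obtain ⟨hne, h | h⟩ := h
  · exact aux_E2_rel hx hy h
  · obtain ⟨ht, hs⟩ := aux_E2_rel hy hx h
    exact ⟨ht.symm, hs.symm⟩

lemma aux_inj2 {x y : auxV n} (hx : x ∈ auxW2 n) (hy : y ∈ auxW2 n)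
    (ht : auxT2 x = auxT2 y) (hg : auxG2 x = auxG2 y) : x = y := by
  rcases hx with ⟨P, rfl⟩ | ⟨p, q, i, he, rfl, hi⟩ <;>
    rcases hy with ⟨P', rfl⟩ | ⟨p', q', i', he', rfl, hi'⟩
  · simp only [auxT2_vnode, Option.some.injEq] at ht
    rw [ht]
  · simp only [auxG2_vnode, auxG2_vmid] at hg
    exact absurd hg (by simp)
  · simp only [auxG2_vnode, auxG2_vmid] at hg
    exact absurd hg (by simp)
  · simp only [auxT2_vmid, Option.some.injEq] at ht
    simp only [auxG2_vmid, Option.some.injEq, Prod.mk.injEq] at hg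
    obtain ⟨hg1, hg2⟩ := hg
    have hbiff : (i.val = 1 ∨ i.val = 3) ↔ (i'.val = 1 ∨ i'.val = 3) :=
      decide_eq_decide.mp hg2
    by_cases hs : i.val ≤ 1 <;> by_cases hs' : i'.val ≤ 1
    · rw [if_pos hs, if_pos hs'] at ht hg1
      subst ht
      have hq : q = q' := aux_relIdx_inj (Or.inl he) (Or.inl he') hg1
      subst hq
      have hii : i.val = i'.val := by
        by_cases hi1 : i.val = 1
        · have := hbiff.mp (Or.inl hi1)
          omega
        · by_cases hi1' : i'.val = 1
          · have := hbiff.mpr (Or.inl hi1')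
            omega
          · omega
      rw [vmid_inj]
      exact ⟨rfl, rfl, Fin.ext hii⟩
    · rw [if_pos hs, if_neg hs'] at ht hg1
      exfalso
      have hpq : p = q' := ht
      rw [← hpq] at he' hg1
      have hqq : q = p' := aux_relIdx_inj (Or.inl he) (Or.inr he') hg1
      rw [← hqq] at he'
      exact auxEAdj_antisymm he he'
    · rw [if_neg hs, if_pos hs'] at ht hg1
      exfalso
      have hpq : q = p' := ht
      rw [← hpq] at he' hg1
      have hqq : p = q' := aux_relIdx_inj (Or.inr he) (Or.inl he') hg1
      rw [← hqq] at he'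
      exact auxEAdj_antisymm he he'
    · rw [if_neg hs, if_neg hs'] at ht hg1
      have hqq : q = q' := ht
      subst hqq
      have hpp : p = p' := aux_relIdx_inj (Or.inr he) (Or.inr he') hg1
      subst hpp
      have hii : i.val = i'.val := by
        by_cases hi3 : i.val = 3
        · have := hbiff.mp (Or.inr hi3)
          omega
        · by_cases hi3' : i'.val = 3
          · have := hbiff.mpr (Or.inr hi3')
            omega
          · omega
      rw [vmid_inj]
      exact ⟨rfl, rfl, Fin.ext hii⟩

lemma aux_cover_rel {x y : auxV n} (h : auxRel n x y)
    (hxa : x ≠ va n) (hxb : x ≠ vb n) :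
    (x ∈ auxW1 n ∧ y ∈ auxW1 n) ∨ (x ∈ auxW2 n ∧ y ∈ auxW2 n) := by
  rcases h with ⟨h1, _⟩ | ⟨h1, _⟩ | ⟨p, q, i, he, (⟨h1, h2, h3⟩ | ⟨h1, h2, h3⟩)⟩ |
    ⟨p, q, i, j, he, h1, h2, h3⟩
  · exact absurd h1 hxa
  · exact absurd h1 hxb
  · subst h1; subst h2
    exact Or.inr ⟨Or.inl ⟨p, rfl⟩, Or.inr ⟨p, q, i, he, rfl, Or.inl h3⟩⟩
  · subst h1; subst h2
    exact Or.inr ⟨Or.inl ⟨q, rfl⟩, Or.inr ⟨p, q, i, he, rfl, by omega⟩⟩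
  · subst h1; subst h2
    have hj := j.isLt
    rcases (show i.val = 0 ∨ i.val = 1 ∨ i.val = 2 ∨ i.val = 3 by omega) with h0 | h0 | h0 | h0
    · exact Or.inr ⟨Or.inr ⟨p, q, i, he, rfl, by omega⟩, Or.inr ⟨p, q, j, he, rfl, by omega⟩⟩
    · exact Or.inl ⟨⟨p, q, i, he, rfl, by omega⟩, ⟨p, q, j, he, rfl, by omega⟩⟩
    · exact Or.inl ⟨⟨p, q, i, he, rfl, by omega⟩, ⟨p, q, j, he, rfl, by omega⟩⟩
    · exact Or.inr ⟨Or.inr ⟨p, q, i, he, rfl, by omega⟩, Or.inr ⟨p, q, j, he, rfl, by omega⟩⟩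

lemma aux_cover {x y : auxV n} (h : (auxG n).Adj x y)
    (hxa : x ≠ va n) (hya : y ≠ va n) (hxb : x ≠ vb n) (hyb : y ≠ vb n) :
    (x ∈ auxW1 n ∧ y ∈ auxW1 n) ∨ (x ∈ auxW2 n ∧ y ∈ auxW2 n) := by
  rw [auxG, SimpleGraph.fromRel_adj] at h
  obtain ⟨hne, h | h⟩ := h
  · exact aux_cover_rel h hxa hxb
  · rcases aux_cover_rel h hya hyb with ⟨h1, h2⟩ | ⟨h1, h2⟩
    · exact Or.inl ⟨h2, h1⟩
    · exact Or.inr ⟨h2, h1⟩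

end Construction3

section Construction4
variable {n : ℕ}

def auxB (n : ℕ) (w : Fin (n + 1)) : Set (auxV n) :=
  {x | (∃ i, x = vnode (w, i)) ∨
    ∃ p q j, auxEAdj p q ∧ x = vmid p q j ∧
      ((p.1 = w ∧ q.1 = w) ∨ (p.1 ≠ q.1 ∧ p.1 = w ∧ j.val ≤ 2) ∨
       (p.1 ≠ q.1 ∧ q.1 = w ∧ 3 ≤ j.val))}

def auxF (n : ℕ) (w : Fin (n + 1)) : auxV n → ℕ
  | Sum.inr (Sum.inl u) => 7 * u.2.val
  | Sum.inr (Sum.inr (p, q, j)) =>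
      if p.1 = q.1 then 7 * p.2.val + j.val + 1
      else if p.1 = w then 7 * (n + 1) + j.val else 7 * (n + 1) + 5 - j.val
  | _ => 0

@[simp] lemma auxF_vnode (w : Fin (n + 1)) (u : auxP n) : auxF n w (vnode u) = 7 * u.2.val := rfl
@[simp] lemma auxF_vmid (w : Fin (n + 1)) (p q : auxP n) (j : Fin 5) :
    auxF n w (vmid p q j) =
      if p.1 = q.1 then 7 * p.2.val + j.val + 1
      else if p.1 = w then 7 * (n + 1) + j.val else 7 * (n + 1) + 5 - j.val := rfl

lemma aux_adj_node_mid0 {p q : auxP n} (he : auxEAdj p q) (i : Fin 5) (hi : i.val = 0) :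
    (auxG n).Adj (vmid p q i) (vnode p) := by
  rw [auxG, SimpleGraph.fromRel_adj]
  exact ⟨(vnode_ne_vmid _ _ _ _).symm,
    Or.inr (Or.inr (Or.inr (Or.inl ⟨p, q, i, he, Or.inl ⟨rfl, rfl, hi⟩⟩)))⟩

lemma aux_adj_node_mid4 {p q : auxP n} (he : auxEAdj p q) (i : Fin 5) (hi : i.val = 4) :
    (auxG n).Adj (vmid p q i) (vnode q) := by
  rw [auxG, SimpleGraph.fromRel_adj]
  exact ⟨(vnode_ne_vmid _ _ _ _).symm,
    Or.inr (Or.inr (Or.inr (Or.inl ⟨p, q, i, he, Or.inr ⟨rfl, rfl, hi⟩⟩)))⟩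

lemma aux_adj_mid_mid {p q : auxP n} (he : auxEAdj p q) (i j : Fin 5) (hij : j.val = i.val + 1) :
    (auxG n).Adj (vmid p q i) (vmid p q j) := by
  rw [auxG, SimpleGraph.fromRel_adj]
  refine ⟨?_, Or.inl (Or.inr (Or.inr (Or.inr ⟨p, q, i, j, he, rfl, rfl, hij⟩)))⟩
  simp only [ne_eq, vmid_inj, not_and]
  intro _ _ hii
  rw [Fin.ext_iff] at hii
  omega

lemma aux_parent (w : Fin (n + 1)) :
    ∀ x ∈ auxB n w, x ≠ vnode (w, (0 : Fin (n + 1))) →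
      ∃ y, y ∈ auxB n w ∧ (auxG n).Adj x y ∧ auxF n w y < auxF n w x := by
  rintro x (⟨i, rfl⟩ | ⟨p, q, j, he, rfl, hcase⟩) hxr
  · have hi0 : i.val ≠ 0 := by
      intro h0
      exact hxr (by rw [vnode_inj]; exact Prod.ext rfl (Fin.ext h0))
    have hib : i.val - 1 < n + 1 := by omega
    have hee : auxEAdj ((w, ⟨i.val - 1, hib⟩) : auxP n) ((w, i) : auxP n) :=
      Or.inl ⟨rfl, show i.val = i.val - 1 + 1 by omega⟩
    refine ⟨vmid (w, ⟨i.val - 1, hib⟩) (w, i) ⟨4, by omega⟩, ?_, ?_, ?_⟩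
    · exact Or.inr ⟨(w, ⟨i.val - 1, hib⟩), (w, i), _, hee, rfl, Or.inl ⟨rfl, rfl⟩⟩
    · exact (aux_adj_node_mid4 hee _ rfl).symm
    · simp only [auxF_vnode, auxF_vmid, if_pos rfl]
      show 7 * (i.val - 1) + 4 + 1 < 7 * i.val
      omega
  · rcases hcase with ⟨hp, hq⟩ | ⟨hne, hp, hj⟩ | ⟨hne, hq, hj⟩
    · have hepath : p.1 = q.1 ∧ q.2.val = p.2.val + 1 := by
        rcases he with h | ⟨h1, h2⟩
        · exact h
        · exfalso
          have hq1 : q.1 = p.2 := by rw [h2]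
          have : p.1.val = p.2.val := by rw [hp, ← hq, hq1]
          omega
      by_cases hj0 : j.val = 0
      · refine ⟨vnode p, Or.inl ⟨p.2, by rw [vnode_inj, Prod.ext_iff]; exact ⟨hp, rfl⟩⟩,
          aux_adj_node_mid0 he j hj0, ?_⟩
        simp only [auxF_vnode, auxF_vmid, if_pos hepath.1]
        omega
      · refine ⟨vmid p q ⟨j.val - 1, by omega⟩, ?_, ?_, ?_⟩
        · exact Or.inr ⟨p, q, _, he, rfl, Or.inl ⟨hp, hq⟩⟩
        · exact (aux_adj_mid_mid he ⟨j.val - 1, by omega⟩ j (show j.val = j.val - 1 + 1 by omega)).symm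
        · simp only [auxF_vmid, if_pos hepath.1]
          show 7 * p.2.val + (j.val - 1) + 1 < 7 * p.2.val + j.val + 1
          omega
    · by_cases hj0 : j.val = 0
      · refine ⟨vnode p, Or.inl ⟨p.2, by rw [vnode_inj, Prod.ext_iff]; exact ⟨hp, rfl⟩⟩,
          aux_adj_node_mid0 he j hj0, ?_⟩
        simp only [auxF_vnode, auxF_vmid, if_neg hne, if_pos hp]
        have := p.2.isLt
        omega
      · refine ⟨vmid p q ⟨j.val - 1, by omega⟩, ?_, ?_, ?_⟩
        · exact Or.inr ⟨p, q, _, he, rfl, Or.inr (Or.inl ⟨hne, hp, show j.val - 1 ≤ 2 by omega⟩)⟩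
        · exact (aux_adj_mid_mid he ⟨j.val - 1, by omega⟩ j (show j.val = j.val - 1 + 1 by omega)).symm
        · simp only [auxF_vmid, if_neg hne, if_pos hp]
          show 7 * (n + 1) + (j.val - 1) < 7 * (n + 1) + j.val
          omega
    · have hpw : p.1 ≠ w := by
        intro hc
        exact hne (hc.trans hq.symm)
      by_cases hj4 : j.val = 4
      · refine ⟨vnode q, Or.inl ⟨q.2, by rw [vnode_inj, Prod.ext_iff]; exact ⟨hq, rfl⟩⟩,
          aux_adj_node_mid4 he j hj4, ?_⟩
        simp only [auxF_vnode, auxF_vmid, if_neg hne, if_neg hpw]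
        have := q.2.isLt
        omega
      · refine ⟨vmid p q ⟨4, by omega⟩, ?_, ?_, ?_⟩
        · exact Or.inr ⟨p, q, _, he, rfl, Or.inr (Or.inr ⟨hne, hq, show (3:ℕ) ≤ 4 by omega⟩)⟩
        · exact aux_adj_mid_mid he j ⟨4, by omega⟩ (show (4:ℕ) = j.val + 1 by omega)
        · simp only [auxF_vmid, if_neg hne, if_neg hpw]
          show 7 * (n + 1) + 5 - 4 < 7 * (n + 1) + 5 - j.val
          omega

lemma aux_Bdisj (w w' : Fin (n + 1)) (hww : w ≠ w') {x : auxV n}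
    (hx : x ∈ auxB n w) (hx' : x ∈ auxB n w') : False := by
  rcases hx with ⟨i, rfl⟩ | ⟨p, q, j, he, rfl, hc⟩
  · rcases hx' with ⟨i', heq⟩ | ⟨p, q, j, _, heq, _⟩
    · rw [vnode_inj, Prod.ext_iff] at heq
      exact hww heq.1
    · exact (vnode_ne_vmid _ _ _ _) heq
  · rcases hx' with ⟨i', heq⟩ | ⟨p', q', j', he', heq, hc'⟩
    · exact (vnode_ne_vmid _ _ _ _) heq.symm
    · rw [vmid_inj] at heq
      obtain ⟨hpp, hqq, hjj⟩ := heq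
      subst hpp; subst hqq; subst hjj
      rcases hc with ⟨a1, a2⟩ | ⟨a1, a2, a3⟩ | ⟨a1, a2, a3⟩ <;>
        rcases hc' with ⟨b1, b2⟩ | ⟨b1, b2, b3⟩ | ⟨b1, b2, b3⟩
      · exact hww (a1.symm.trans b1)
      · exact b1 (a1.trans a2.symm) |>.elim
      · exact b1 (a1.trans a2.symm) |>.elim
      · exact a1 (b1.trans b2.symm) |>.elim
      · exact hww (a2.symm.trans b2)
      · omega
      · exact a1 (b1.trans b2.symm) |>.elim
      · omega
      · exact hww (a2.symm.trans b2)

lemma aux_Badj (w w' : Fin (n + 1)) (hlt : w.val < w'.val) :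
    ∃ u, u ∈ auxB n w ∧ ∃ v, v ∈ auxB n w' ∧ (auxG n).Adj u v := by
  have he : auxEAdj ((w, w') : auxP n) ((w', w) : auxP n) := Or.inr ⟨hlt, rfl⟩
  have hne1 : ((w, w') : auxP n).1 ≠ ((w', w) : auxP n).1 := by
    intro h
    have : w.val = w'.val := by rw [show w = w' from h]
    omega
  refine ⟨vmid (w, w') (w', w) ⟨2, by omega⟩,
    Or.inr ⟨(w, w'), (w', w), _, he, rfl, Or.inr (Or.inl ⟨hne1, rfl, by norm_num⟩)⟩,
    vmid (w, w') (w', w) ⟨3, by omega⟩,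
    Or.inr ⟨(w, w'), (w', w), _, he, rfl, Or.inr (Or.inr ⟨hne1, rfl, by norm_num⟩)⟩, ?_⟩
  exact aux_adj_mid_mid he _ _ (by norm_num)

end Construction4

section Ranks
variable {n : ℕ}

def auxRk1 (n : ℕ) (x : auxV n) : ℕ :=
  if x = va n then 2 else if (auxG1 x).val = 1 then 1 else 0

def auxRk2 (n : ℕ) (x : auxV n) : ℕ :=
  if x = vb n then 3 else if auxG2 x = none then 2
    else if ∃ l, auxG2 x = some (l, true) then 0 else 1

def auxLeg : Option (Fin 3 × Bool) → Fin 3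
  | some (l, _) => l
  | none => 0

lemma aux_rk1_va : auxRk1 n (va n) = 2 := by simp [auxRk1]

lemma aux_rk1_le {x : auxV n} (hx : x ∈ auxW1 n) : auxRk1 n x ≤ 1 := by
  have hne : x ≠ va n := by
    intro h
    rw [h] at hx
    exact va_not_W1 hx
  rw [auxRk1, if_neg hne]
  split_ifs <;> omega

lemma aux_rk2_vb : auxRk2 n (vb n) = 3 := by simp [auxRk2]

lemma aux_rk2_le {x : auxV n} (hx : x ∈ auxW2 n) : auxRk2 n x ≤ 2 := by
  have hne : x ≠ vb n := by
    intro h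
    rw [h] at hx
    exact vb_not_W2 hx
  rw [auxRk2, if_neg hne]
  split_ifs <;> omega

lemma aux_path_adj_one {a b : Fin 3} (h : (SimpleGraph.pathGraph 3).Adj a b)
    (ha : a.val ≠ 1) : b.val = 1 := by
  rw [SimpleGraph.pathGraph_adj] at h
  have h3 := a.isLt
  have h4 := b.isLt
  omega

lemma aux_sep1 (u v : auxV n) (hu : u ∈ insert (va n) (auxW1 n))
    (hv : v ∈ insert (va n) (auxW1 n)) (hne : u ≠ v) (hrk : auxRk1 n u = auxRk1 n v) :
    (∀ z, z ∈ insert (va n) (auxW1 n) → (auxG n).Adj u z → auxRk1 n u < auxRk1 n z) ∨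
    (∃ σ : auxV n → Option (auxP n × auxP n), σ u ≠ σ v ∧
      ∀ x y, x ∈ insert (va n) (auxW1 n) → y ∈ insert (va n) (auxW1 n) → (auxG n).Adj x y →
        auxRk1 n x ≤ auxRk1 n u → auxRk1 n y ≤ auxRk1 n u → σ x = σ y) := by
  rcases Set.mem_insert_iff.mp hu with rfl | huW
  · exfalso
    rcases Set.mem_insert_iff.mp hv with rfl | hvW
    · exact hne rfl
    · have := aux_rk1_le hvW
      rw [aux_rk1_va] at hrk
      omega
  rcases Set.mem_insert_iff.mp hv with rfl | hvW
  · exfalso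
    have := aux_rk1_le huW
    rw [aux_rk1_va] at hrk
    omega
  have hua : u ≠ va n := fun h => va_not_W1 (h ▸ huW)
  have hva : v ≠ va n := fun h => va_not_W1 (h ▸ hvW)
  by_cases hmid : (auxG1 u).val = 1
  · right
    have hrku : auxRk1 n u = 1 := by rw [auxRk1, if_neg hua, if_pos hmid]
    refine ⟨auxT1, ?_, ?_⟩
    · intro hT
      have hrkv : auxRk1 n v = 1 := hrk ▸ hrku
      have hmidv : (auxG1 v).val = 1 := by
        by_contra hc
        rw [auxRk1, if_neg hva, if_neg hc] at hrkv
        omega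
      exact hne (aux_inj1 huW hvW hT (Fin.ext (hmid.trans hmidv.symm)))
    · intro x y hxS hyS hxy hrx hry
      rw [hrku] at hrx hry
      have hxW : x ∈ auxW1 n := by
        rcases Set.mem_insert_iff.mp hxS with rfl | h
        · rw [aux_rk1_va] at hrx; omega
        · exact h
      have hyW : y ∈ auxW1 n := by
        rcases Set.mem_insert_iff.mp hyS with rfl | h
        · rw [aux_rk1_va] at hry; omega
        · exact h
      exact (aux_E1 hxW hyW hxy).1
  · left
    intro z hzS hadj
    have hrku : auxRk1 n u = 0 := by rw [auxRk1, if_neg hua, if_neg hmid]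
    rw [hrku]
    rcases Set.mem_insert_iff.mp hzS with rfl | hzW
    · rw [aux_rk1_va]; omega
    · have hz1 : (auxG1 z).val = 1 := aux_path_adj_one (aux_E1 huW hzW hadj).2 hmid
      have hza : z ≠ va n := fun h => va_not_W1 (h ▸ hzW)
      rw [auxRk1, if_neg hza, if_pos hz1]
      omega

lemma aux_sep2 (u v : auxV n) (hu : u ∈ insert (vb n) (auxW2 n))
    (hv : v ∈ insert (vb n) (auxW2 n)) (hne : u ≠ v) (hrk : auxRk2 n u = auxRk2 n v) :
    (∀ z, z ∈ insert (vb n) (auxW2 n) → (auxG n).Adj u z → auxRk2 n u < auxRk2 n z) ∨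
    (∃ (α : Type) (σ : auxV n → α), σ u ≠ σ v ∧
      ∀ x y, x ∈ insert (vb n) (auxW2 n) → y ∈ insert (vb n) (auxW2 n) → (auxG n).Adj x y →
        auxRk2 n x ≤ auxRk2 n u → auxRk2 n y ≤ auxRk2 n u → σ x = σ y) := by
  rcases Set.mem_insert_iff.mp hu with rfl | huW
  · exfalso
    rcases Set.mem_insert_iff.mp hv with rfl | hvW
    · exact hne rfl
    · have := aux_rk2_le hvW
      rw [aux_rk2_vb] at hrk
      omega
  rcases Set.mem_insert_iff.mp hv with rfl | hvW
  · exfalso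
    have := aux_rk2_le huW
    rw [aux_rk2_vb] at hrk
    omega
  have hub : u ≠ vb n := fun h => vb_not_W2 (h ▸ huW)
  have hvb : v ≠ vb n := fun h => vb_not_W2 (h ▸ hvW)
  rcases hgu : auxG2 u with _ | ⟨lu, bu⟩
  · -- center: rank 2
    right
    have hrku : auxRk2 n u = 2 := by rw [auxRk2, if_neg hub]; simp [hgu]
    refine ⟨Option (auxP n), auxT2, ?_, ?_⟩
    · intro hT
      have hrkv : auxRk2 n v = 2 := hrk ▸ hrku
      have hgv : auxG2 v = none := by
        rcases hgv : auxG2 v with _ | ⟨lv, bv⟩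
        · rfl
        · rw [auxRk2, if_neg hvb] at hrkv
          cases bv <;> simp [hgv] at hrkv
      exact hne (aux_inj2 huW hvW hT (hgu.trans hgv.symm))
    · intro x y hxS hyS hxy hrx hry
      rw [hrku] at hrx hry
      have hxW : x ∈ auxW2 n := by
        rcases Set.mem_insert_iff.mp hxS with rfl | h
        · rw [aux_rk2_vb] at hrx; omega
        · exact h
      have hyW : y ∈ auxW2 n := by
        rcases Set.mem_insert_iff.mp hyS with rfl | h
        · rw [aux_rk2_vb] at hry; omega
        · exact h
      exact (aux_E2 hxW hyW hxy).1
  · cases bu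
    · -- leg middle: rank 1
      right
      have hrku : auxRk2 n u = 1 := by rw [auxRk2, if_neg hub]; simp [hgu]
      refine ⟨Option (auxP n) × Fin 3, fun x => (auxT2 x, auxLeg (auxG2 x)), ?_, ?_⟩
      · intro hT
        rw [Prod.mk.injEq] at hT
        obtain ⟨hT1, hT2⟩ := hT
        have hrkv : auxRk2 n v = 1 := hrk ▸ hrku
        have hgv : ∃ lv, auxG2 v = some (lv, false) := by
          rcases hgv : auxG2 v with _ | ⟨lv, bv⟩
          · rw [auxRk2, if_neg hvb] at hrkv
            simp [hgv] at hrkv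
          · cases bv
            · exact ⟨lv, rfl⟩
            · rw [auxRk2, if_neg hvb] at hrkv
              simp [hgv] at hrkv
        obtain ⟨lv, hgv⟩ := hgv
        have hleg : lu = lv := by
          rw [hgu, hgv] at hT2
          exact hT2
        exact hne (aux_inj2 huW hvW hT1 (by rw [hgu, hgv, hleg]))
      · intro x y hxS hyS hxy hrx hry
        rw [hrku] at hrx hry
        have hxW : x ∈ auxW2 n := by
          rcases Set.mem_insert_iff.mp hxS with rfl | h
          · rw [aux_rk2_vb] at hrx; omega
          · exact h
        have hyW : y ∈ auxW2 n := by
          rcases Set.mem_insert_iff.mp hyS with rfl | h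
          · rw [aux_rk2_vb] at hry; omega
          · exact h
        have hxb : x ≠ vb n := fun h => vb_not_W2 (h ▸ hxW)
        have hyb : y ≠ vb n := fun h => vb_not_W2 (h ▸ hyW)
        obtain ⟨ht2, hstar⟩ := aux_E2 hxW hyW hxy
        rw [Prod.mk.injEq]
        refine ⟨ht2, ?_⟩
        rcases hgx : auxG2 x with _ | ⟨lx, bx⟩
        · exfalso
          rw [auxRk2, if_neg hxb] at hrx
          simp [hgx] at hrx
        · rcases hgy : auxG2 y with _ | ⟨ly, by'⟩
          · exfalso
            rw [auxRk2, if_neg hyb] at hry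
            simp [hgy] at hry
          · rw [hgx, hgy] at hstar
            have hll := aux_star_adj_inv_some hstar
            simp [auxLeg, hll]
    · -- leaf: rank 0
      left
      intro z hzS hadj
      have hrku : auxRk2 n u = 0 := by
        rw [auxRk2, if_neg hub]
        simp [hgu]
      rw [hrku]
      rcases Set.mem_insert_iff.mp hzS with rfl | hzW
      · rw [aux_rk2_vb]; omega
      · have hzb : z ≠ vb n := fun h => vb_not_W2 (h ▸ hzW)
        obtain ⟨_, hstar⟩ := aux_E2 huW hzW hadj
        rw [hgu] at hstar
        have hgz := aux_star_adj_inv_true hstar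
        rw [auxRk2, if_neg hzb]
        simp [hgz]

end Ranks


theorem stmt17 (n : ℕ) (hn : 1 ≤ n) :
    ∃ (m : ℕ) (G : SimpleGraph (Fin m)) (H : Fin 2 → G.Subgraph),
      n ≤ treewidth G ∧ EdgeCover H ∧ (∀ i, (H i).IsIsometric) ∧
      InApex (H 0).coe (SimpleGraph.pathGraph 3) ∧ InApex (H 1).coe (subdividedStar 3) ∧
      treedepth (H 0).coe ≤ 3 ∧ treedepth (H 1).coe ≤ 4 := by
  classical
  set m := Fintype.card (auxV n) with hm
  set e : auxV n ≃ Fin m := Fintype.equivFin _ with he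
  set G : SimpleGraph (Fin m) := (auxG n).comap ⇑e.symm with hG
  have hGadj : ∀ x y : Fin m, G.Adj x y ↔ (auxG n).Adj (e.symm x) (e.symm y) :=
    fun x y => Iff.rfl
  set a0 : Fin m := e (va n) with ha0
  set b0 : Fin m := e (vb n) with hb0
  set W1 : Set (Fin m) := {x | e.symm x ∈ auxW1 n} with hW1
  set W2 : Set (Fin m) := {x | e.symm x ∈ auxW2 n} with hW2
  have hsymm_a : e.symm a0 = va n := e.symm_apply_apply _
  have hsymm_b : e.symm b0 = vb n := e.symm_apply_apply _
  have hmem1 : ∀ x : Fin m, x ∈ insert a0 W1 ↔ e.symm x ∈ insert (va n) (auxW1 n) := by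
    intro x
    simp only [Set.mem_insert_iff, Set.mem_setOf_eq]
    constructor
    · rintro (rfl | h)
      · exact Or.inl hsymm_a
      · exact Or.inr h
    · rintro (h | h)
      · exact Or.inl (e.symm.injective (h.trans hsymm_a.symm))
      · exact Or.inr h
  have hmem2 : ∀ x : Fin m, x ∈ insert b0 W2 ↔ e.symm x ∈ insert (vb n) (auxW2 n) := by
    intro x
    simp only [Set.mem_insert_iff, Set.mem_setOf_eq]
    constructor
    · rintro (rfl | h)
      · exact Or.inl hsymm_b
      · exact Or.inr h
    · rintro (h | h)
      · exact Or.inl (e.symm.injective (h.trans hsymm_b.symm))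
      · exact Or.inr h
  have hadjA0 : ∀ x, G.Adj a0 x ↔ x ∈ W1 := by
    intro x
    rw [hGadj, hsymm_a, aux_adjA]
    exact Iff.rfl
  have hadjB0 : ∀ x, G.Adj b0 x ↔ x ∈ W2 := by
    intro x
    rw [hGadj, hsymm_b, aux_adjB]
    exact Iff.rfl
  set H1 : G.Subgraph := auxSub G (insert a0 W1) with hH1
  set H2 : G.Subgraph := auxSub G (insert b0 W2) with hH2
  refine ⟨m, G, ![H1, H2], ?_, ?_, ?_, ?_, ?_, ?_, ?_⟩
  · -- treewidth
    apply aux_tw_ge (B := fun w => {x | e.symm x ∈ auxB n w})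
    · intro w
      apply aux_connected_of_root (r := e (vnode (w, 0)))
        (f := fun x => auxF n w (e.symm x))
      · show e.symm (e (vnode ((w, 0) : auxP n))) ∈ auxB n w
        rw [e.symm_apply_apply]
        exact Or.inl ⟨0, rfl⟩
      · intro x hx hxr
        obtain ⟨y, hyB, hyadj, hylt⟩ := aux_parent w (e.symm x) hx
          (by
            intro h
            apply hxr
            have := congrArg e h
            rwa [e.apply_symm_apply] at this)
        refine ⟨e y, ?_, ?_, ?_⟩
        · show e.symm (e y) ∈ auxB n w
          rwa [e.symm_apply_apply]
        · rw [hGadj, e.symm_apply_apply]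
          exact hyadj
        · show auxF n w (e.symm (e y)) < auxF n w (e.symm x)
          rwa [e.symm_apply_apply]
    · intro w w' hww
      rw [Set.disjoint_left]
      intro x hx hx'
      exact aux_Bdisj w w' hww hx hx'
    · intro w w' hww
      have hvv : w.val ≠ w'.val := fun h => hww (Fin.ext h)
      rcases lt_or_gt_of_ne hvv with h | h
      · obtain ⟨u, hu, v, hv, hadj⟩ := aux_Badj w w' h
        refine ⟨e u, ?_, e v, ?_, ?_⟩
        · show e.symm (e u) ∈ auxB n w
          rwa [e.symm_apply_apply]
        · show e.symm (e v) ∈ auxB n w'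
          rwa [e.symm_apply_apply]
        · rw [hGadj, e.symm_apply_apply, e.symm_apply_apply]
          exact hadj
      · obtain ⟨u, hu, v, hv, hadj⟩ := aux_Badj w' w h
        refine ⟨e v, ?_, e u, ?_, ?_⟩
        · show e.symm (e v) ∈ auxB n w
          rwa [e.symm_apply_apply]
        · show e.symm (e u) ∈ auxB n w'
          rwa [e.symm_apply_apply]
        · rw [hGadj, e.symm_apply_apply, e.symm_apply_apply]
          exact hadj.symm
  · -- edge cover
    intro u v huv
    have huv' : (auxG n).Adj (e.symm u) (e.symm v) := huv
    by_cases hua : e.symm u = va n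
    · refine ⟨0, Or.inl (e.symm.injective (hua.trans hsymm_a.symm)), ?_, huv⟩
      exact Or.inr (show e.symm v ∈ auxW1 n from (aux_adjA _).mp (hua ▸ huv'))
    · by_cases hva : e.symm v = va n
      · refine ⟨0, ?_, Or.inl (e.symm.injective (hva.trans hsymm_a.symm)), huv⟩
        exact Or.inr (show e.symm u ∈ auxW1 n from (aux_adjA _).mp (hva ▸ huv'.symm))
      · by_cases hub : e.symm u = vb n
        · refine ⟨1, Or.inl (e.symm.injective (hub.trans hsymm_b.symm)), ?_, huv⟩
          exact Or.inr (show e.symm v ∈ auxW2 n from (aux_adjB _).mp (hub ▸ huv'))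
        · by_cases hvb : e.symm v = vb n
          · refine ⟨1, ?_, Or.inl (e.symm.injective (hvb.trans hsymm_b.symm)), huv⟩
            exact Or.inr (show e.symm u ∈ auxW2 n from (aux_adjB _).mp (hvb ▸ huv'.symm))
          · rcases aux_cover huv' hua hva hub hvb with ⟨h1, h2⟩ | ⟨h1, h2⟩
            · exact ⟨0, Or.inr h1, Or.inr h2, huv⟩
            · exact ⟨1, Or.inr h1, Or.inr h2, huv⟩
  · -- isometric
    intro i
    fin_cases i
    · exact aux_isometric a0 W1 hadjA0
    · exact aux_isometric b0 W2 hadjB0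
  · -- InApex H1
    apply aux_inApex a0 (insert a0 W1) (Set.mem_insert _ _) (SimpleGraph.pathGraph 3)
      (fun x => auxT1 (e.symm x)) (fun x => auxG1 (e.symm x))
    · intro x y hxy hxa hya
      obtain ⟨hxS, hyS, hGxy⟩ := hxy
      have hxW : e.symm x ∈ auxW1 n := by
        rcases (hmem1 x).mp hxS with h | h
        · exact absurd (e.symm.injective (h.trans hsymm_a.symm)) hxa
        · exact h
      have hyW : e.symm y ∈ auxW1 n := by
        rcases (hmem1 y).mp hyS with h | h
        · exact absurd (e.symm.injective (h.trans hsymm_a.symm)) hya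
        · exact h
      exact aux_E1 hxW hyW hGxy
    · intro x y hxS hyS hxa hya ht hg
      have hxW : e.symm x ∈ auxW1 n := by
        rcases (hmem1 x).mp hxS with h | h
        · exact absurd (e.symm.injective (h.trans hsymm_a.symm)) hxa
        · exact h
      have hyW : e.symm y ∈ auxW1 n := by
        rcases (hmem1 y).mp hyS with h | h
        · exact absurd (e.symm.injective (h.trans hsymm_a.symm)) hya
        · exact h
      exact e.symm.injective (aux_inj1 hxW hyW ht hg)
  · -- InApex H2
    apply aux_inApex b0 (insert b0 W2) (Set.mem_insert _ _) (subdividedStar 3)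
      (fun x => auxT2 (e.symm x)) (fun x => auxG2 (e.symm x))
    · intro x y hxy hxa hya
      obtain ⟨hxS, hyS, hGxy⟩ := hxy
      have hxW : e.symm x ∈ auxW2 n := by
        rcases (hmem2 x).mp hxS with h | h
        · exact absurd (e.symm.injective (h.trans hsymm_b.symm)) hxa
        · exact h
      have hyW : e.symm y ∈ auxW2 n := by
        rcases (hmem2 y).mp hyS with h | h
        · exact absurd (e.symm.injective (h.trans hsymm_b.symm)) hya
        · exact h
      exact aux_E2 hxW hyW hGxy
    · intro x y hxS hyS hxa hya ht hg
      have hxW : e.symm x ∈ auxW2 n := by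
        rcases (hmem2 x).mp hxS with h | h
        · exact absurd (e.symm.injective (h.trans hsymm_b.symm)) hxa
        · exact h
      have hyW : e.symm y ∈ auxW2 n := by
        rcases (hmem2 y).mp hyS with h | h
        · exact absurd (e.symm.injective (h.trans hsymm_b.symm)) hya
        · exact h
      exact e.symm.injective (aux_inj2 hxW hyW ht hg)
  · -- treedepth H1 ≤ 3
    apply aux_rank_of_sep (rk := fun x => auxRk1 n (e.symm x)) (k := 3)
    · intro x hx
      rcases (hmem1 x).mp hx with h | h
      · rw [h, aux_rk1_va]; omega
      · have := aux_rk1_le h; omega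
    · intro u v hu hv hne hrk
      have hne' : e.symm u ≠ e.symm v := fun h => hne (e.symm.injective h)
      rcases aux_sep1 (e.symm u) (e.symm v) ((hmem1 u).mp hu) ((hmem1 v).mp hv) hne' hrk
        with h | ⟨σ, hσne, hσ⟩
      · left
        intro z hz
        obtain ⟨_, hzS, hGz⟩ := hz
        exact h (e.symm z) ((hmem1 z).mp hzS) hGz
      · right
        refine ⟨_, fun x => σ (e.symm x), hσne, ?_⟩
        intro x y hxy hx hy
        obtain ⟨hxS, hyS, hGxy⟩ := hxy
        exact hσ (e.symm x) (e.symm y) ((hmem1 x).mp hxS) ((hmem1 y).mp hyS) hGxy hx hy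
  · -- treedepth H2 ≤ 4
    apply aux_rank_of_sep (rk := fun x => auxRk2 n (e.symm x)) (k := 4)
    · intro x hx
      rcases (hmem2 x).mp hx with h | h
      · rw [h, aux_rk2_vb]; omega
      · have := aux_rk2_le h; omega
    · intro u v hu hv hne hrk
      have hne' : e.symm u ≠ e.symm v := fun h => hne (e.symm.injective h)
      rcases aux_sep2 (e.symm u) (e.symm v) ((hmem2 u).mp hu) ((hmem2 v).mp hv) hne' hrk
        with h | ⟨α, σ, hσne, hσ⟩
      · left
        intro z hz
        obtain ⟨_, hzS, hGz⟩ := hz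
        exact h (e.symm z) ((hmem2 z).mp hzS) hGz
      · right
        refine ⟨α, fun x => σ (e.symm x), hσne, ?_⟩
        intro x y hxy hx hy
        obtain ⟨hxS, hyS, hGxy⟩ := hxy
        exact hσ (e.symm x) (e.symm y) ((hmem2 x).mp hxS) ((hmem2 y).mp hyS) hGxy hx hy
end
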